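/- arXiv:2102.10166 — 6 statements merged into one kernel-verified Lean document; each statement's English description precedes it below -/
import Mathlib

section
/- Suppose H > 1/2 and bc ≥ 0, or H < 1/2 and bc ≤ 0. Then for all 0 ≤ s < t, a²(t-s) + (b² + c² - 2bc(2^{2H-1}-1))(t-s)^{2H} ≤ α(t,s) ≤ a²(t-s) + (b²+c²)(t-s)^{2H}, where α(t,s) = a²(t-s) - 2^{2H}bc(t^{2H}+s^{2H}) + (b²+c²)(t-s)^{2H} + 2bc(t+s)^{2H}. -/
open Real Set

section copyaux
lemma hasDerivAt_shift_rpow (c γ x : ℝ) (h : x + c ≠ 0) :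
    HasDerivAt (fun u : ℝ => (u + c) ^ γ) (γ * (x + c) ^ (γ - 1)) x := by
  have h1 : HasDerivAt (fun u : ℝ => u + c) 1 x := (hasDerivAt_id x).add_const c
  have h2 := (Real.hasDerivAt_rpow_const (x := x + c) (p := γ) (Or.inl h)).comp x h1
  rw [mul_one] at h2
  exact h2

lemma cont_shift_rpow (c γ : ℝ) (hγ : 0 < γ) :
    Continuous (fun u : ℝ => (u + c) ^ γ) := by
  apply continuous_iff_continuousAt.2
  intro x
  have h1 : ContinuousAt (fun u : ℝ => u + c) x := by fun_prop
  exact h1.rpow_const (Or.inr hγ.le)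

lemma cont_rpow_const (γ : ℝ) (hγ : 0 < γ) : Continuous (fun u : ℝ => u ^ γ) := by
  have := cont_shift_rpow 0 γ hγ
  simpa using this

lemma incr_anti (β u : ℝ) (hβ0 : 0 < β) (hβ1 : β ≤ 1) (hu : 0 ≤ u) :
    AntitoneOn (fun x : ℝ => (x + u) ^ β - x ^ β) (Ici 0) := by
  have hder : ∀ x : ℝ, x ∈ Ioi (0:ℝ) →
      HasDerivAt (fun x : ℝ => (x + u) ^ β - x ^ β)
        (β * (x + u) ^ (β - 1) - β * x ^ (β - 1)) x := by
    intro x hx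
    have hx0 : (0:ℝ) < x := hx
    have h1 := hasDerivAt_shift_rpow u β x (by positivity)
    have h2 := Real.hasDerivAt_rpow_const (x := x) (p := β) (Or.inl hx0.ne')
    exact h1.sub h2
  apply antitoneOn_of_deriv_nonpos (convex_Ici 0)
  · exact ((cont_shift_rpow u β hβ0).sub (cont_rpow_const β hβ0)).continuousOn
  · rw [interior_Ici]
    exact fun x hx => (hder x hx).differentiableAt.differentiableWithinAt
  · rw [interior_Ici]
    intro x hx
    rw [(hder x hx).deriv]
    have hle : (x + u) ^ (β - 1) ≤ x ^ (β - 1) :=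
      Real.rpow_le_rpow_of_nonpos hx (by linarith [hx.out]) (by linarith)
    nlinarith

lemma incr_mono (β u : ℝ) (hβ0 : β < 0) (hu : 0 ≤ u) :
    MonotoneOn (fun x : ℝ => (x + u) ^ β - x ^ β) (Ioi 0) := by
  have hder : ∀ x : ℝ, x ∈ Ioi (0:ℝ) →
      HasDerivAt (fun x : ℝ => (x + u) ^ β - x ^ β)
        (β * (x + u) ^ (β - 1) - β * x ^ (β - 1)) x := by
    intro x hx
    have hx0 : (0:ℝ) < x := hx
    have h1 := hasDerivAt_shift_rpow u β x (by positivity)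
    have h2 := Real.hasDerivAt_rpow_const (x := x) (p := β) (Or.inl hx0.ne')
    exact h1.sub h2
  apply monotoneOn_of_deriv_nonneg (convex_Ioi 0)
  · intro x hx
    exact (hder x hx).differentiableAt.continuousAt.continuousWithinAt
  · rw [interior_Ioi]
    exact fun x hx => (hder x hx).differentiableAt.differentiableWithinAt
  · rw [interior_Ioi]
    intro x hx
    rw [(hder x hx).deriv]
    have hle : (x + u) ^ (β - 1) ≤ x ^ (β - 1) :=
      Real.rpow_le_rpow_of_nonpos hx (by linarith [hx.out]) (by linarith)
    nlinarith
end copyaux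

lemma two_rpow_split (γ : ℝ) : (2:ℝ) ^ γ = 2 ^ (γ - 1) * 2 := by
  have h := Real.rpow_add_one (by norm_num : (2:ℝ) ≠ 0) (γ - 1)
  rw [show γ - 1 + 1 = γ by ring] at h
  exact h

lemma F_hasDerivAt (γ s x : ℝ) (hs : 0 ≤ s) (hx : 0 < x) :
    HasDerivAt (fun u : ℝ => (u + 2*s) ^ γ + ((2:ℝ) ^ (γ-1) - 1) * u ^ γ
        - (2:ℝ) ^ (γ-1) * ((u + s) ^ γ + s ^ γ))
      (γ * (x + 2*s) ^ (γ-1) + ((2:ℝ) ^ (γ-1) - 1) * (γ * x ^ (γ-1))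
        - (2:ℝ) ^ (γ-1) * (γ * (x + s) ^ (γ-1))) x := by
  have h1 := hasDerivAt_shift_rpow (2*s) γ x (by positivity)
  have h2 := Real.hasDerivAt_rpow_const (x := x) (p := γ) (Or.inl hx.ne')
  have h3 := (hasDerivAt_shift_rpow s γ x (by positivity)).add_const (s ^ γ)
  have := (h1.add (h2.const_mul ((2:ℝ)^(γ-1) - 1))).sub (h3.const_mul ((2:ℝ)^(γ-1)))
  exact this

lemma F_cont (γ s : ℝ) (hγ : 0 < γ) :
    Continuous (fun u : ℝ => (u + 2*s) ^ γ + ((2:ℝ) ^ (γ-1) - 1) * u ^ γ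
        - (2:ℝ) ^ (γ-1) * ((u + s) ^ γ + s ^ γ)) := by
  exact ((cont_shift_rpow (2*s) γ hγ).add (continuous_const.mul (cont_rpow_const γ hγ))).sub
    (continuous_const.mul ((cont_shift_rpow s γ hγ).add continuous_const))

lemma F_zero (γ s : ℝ) (hγ : 0 < γ) (hs : 0 ≤ s) :
    (0 + 2*s) ^ γ + ((2:ℝ) ^ (γ-1) - 1) * (0:ℝ) ^ γ
      - (2:ℝ) ^ (γ-1) * ((0 + s) ^ γ + s ^ γ) = 0 := by
  rw [Real.zero_rpow hγ.ne', zero_add, zero_add,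
    Real.mul_rpow (by norm_num) hs, two_rpow_split γ]
  try ring

/-- Key lower-bound inequality for `1 < γ < 2`. -/
lemma key_gt (γ s t : ℝ) (hγ1 : 1 < γ) (hγ2 : γ < 2) (hs : 0 ≤ s) (hst : s ≤ t) :
    (2:ℝ) ^ (γ-1) * (t ^ γ + s ^ γ) ≤ (t + s) ^ γ + ((2:ℝ) ^ (γ-1) - 1) * (t - s) ^ γ := by
  have hγ0 : 0 < γ := by linarith
  set F : ℝ → ℝ := fun u => (u + 2*s) ^ γ + ((2:ℝ) ^ (γ-1) - 1) * u ^ γ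
      - (2:ℝ) ^ (γ-1) * ((u + s) ^ γ + s ^ γ) with hF
  have hmono : MonotoneOn F (Ici 0) := by
    apply monotoneOn_of_deriv_nonneg (convex_Ici 0) (F_cont γ s hγ0).continuousOn
    · rw [interior_Ici]
      exact fun x hx => (F_hasDerivAt γ s x hs hx).differentiableAt.differentiableWithinAt
    · rw [interior_Ici]
      intro x hx
      have hx0 : (0:ℝ) < x := hx
      rw [(F_hasDerivAt γ s x hs hx0).deriv]
      have hβ0 : 0 < γ - 1 := by linarith
      have hβ1 : γ - 1 ≤ 1 := by linarith
      have hA := incr_anti (γ-1) x hβ0 hβ1 hx0.le (show x ∈ Ici (0:ℝ) from hx0.le)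
        (show x + 2*s ∈ Ici (0:ℝ) by simp only [mem_Ici]; linarith) (by linarith)
      simp only at hA
      have e1 : x + 2*s + x = 2*(x+s) := by ring
      have e2 : x + x = 2*x := by ring
      rw [e1, e2, Real.mul_rpow (by norm_num : (0:ℝ) ≤ 2) (show (0:ℝ) ≤ x + s by linarith),
        Real.mul_rpow (by norm_num : (0:ℝ) ≤ 2) hx0.le] at hA
      have h3 : 0 ≤ (x + 2*s) ^ (γ-1) + ((2:ℝ) ^ (γ-1) - 1) * x ^ (γ-1)
          - (2:ℝ) ^ (γ-1) * (x + s) ^ (γ-1) := by nlinarith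
      nlinarith
  have h0 : F 0 ≤ F (t - s) :=
    hmono (self_mem_Ici) (show t - s ∈ Ici (0:ℝ) by simp only [mem_Ici]; linarith) (by linarith)
  have hz : F 0 = 0 := F_zero γ s hγ0 hs
  rw [hz] at h0
  have e1 : t - s + 2*s = t + s := by ring
  have e2 : t - s + s = t := by ring
  simp only [hF, e1, e2] at h0
  linarith

/-- Key upper-bound inequality for `1 < γ`. -/
lemma up_gt (γ s t : ℝ) (hγ1 : 1 < γ) (hs : 0 ≤ s) (hst : s ≤ t) :
    (t + s) ^ γ ≤ (2:ℝ) ^ (γ-1) * (t ^ γ + s ^ γ) := by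
  have hγ0 : 0 < γ := by linarith
  set G : ℝ → ℝ := fun u => (2:ℝ) ^ (γ-1) * ((u + s) ^ γ + s ^ γ) - (u + 2*s) ^ γ with hG
  have hder : ∀ x : ℝ, 0 < x → HasDerivAt G
      ((2:ℝ) ^ (γ-1) * (γ * (x + s) ^ (γ-1)) - γ * (x + 2*s) ^ (γ-1)) x := by
    intro x hx
    have h1 := hasDerivAt_shift_rpow (2*s) γ x (by positivity)
    have h3 := (hasDerivAt_shift_rpow s γ x (by positivity)).add_const (s ^ γ)
    exact (h3.const_mul ((2:ℝ)^(γ-1))).sub h1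
  have hmono : MonotoneOn G (Ici 0) := by
    apply monotoneOn_of_deriv_nonneg (convex_Ici 0)
    · exact ((continuous_const.mul ((cont_shift_rpow s γ hγ0).add continuous_const)).sub
        (cont_shift_rpow (2*s) γ hγ0)).continuousOn
    · rw [interior_Ici]
      exact fun x hx => (hder x hx).differentiableAt.differentiableWithinAt
    · rw [interior_Ici]
      intro x hx
      have hx0 : (0:ℝ) < x := hx
      rw [(hder x hx0).deriv]
      have e1 : (2:ℝ) ^ (γ-1) * (x + s) ^ (γ-1) = (2*(x+s)) ^ (γ-1) :=
        (Real.mul_rpow (by norm_num) (by linarith)).symm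
      have hle : (x + 2*s) ^ (γ-1) ≤ (2*(x+s)) ^ (γ-1) :=
        Real.rpow_le_rpow (by linarith) (by linarith) (by linarith)
      nlinarith
  have h0 : G 0 ≤ G (t - s) :=
    hmono (self_mem_Ici) (show t - s ∈ Ici (0:ℝ) by simp only [mem_Ici]; linarith) (by linarith)
  have hz : G 0 = 0 := by
    simp only [hG, zero_add]
    rw [Real.mul_rpow (by norm_num) hs, two_rpow_split γ]
    try ring
  rw [hz] at h0
  have e1 : t - s + 2*s = t + s := by ring
  have e2 : t - s + s = t := by ring
  simp only [hG, e1, e2] at h0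
  linarith

/-- Key lower-bound inequality for `0 < γ < 1` (reversed). -/
lemma key_lt (γ s t : ℝ) (hγ1 : 0 < γ) (hγ2 : γ < 1) (hs : 0 ≤ s) (hst : s ≤ t) :
    (t + s) ^ γ + ((2:ℝ) ^ (γ-1) - 1) * (t - s) ^ γ ≤ (2:ℝ) ^ (γ-1) * (t ^ γ + s ^ γ) := by
  set F : ℝ → ℝ := fun u => (u + 2*s) ^ γ + ((2:ℝ) ^ (γ-1) - 1) * u ^ γ
      - (2:ℝ) ^ (γ-1) * ((u + s) ^ γ + s ^ γ) with hF
  have hanti : AntitoneOn F (Ici 0) := by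
    apply antitoneOn_of_deriv_nonpos (convex_Ici 0) (F_cont γ s hγ1).continuousOn
    · rw [interior_Ici]
      exact fun x hx => (F_hasDerivAt γ s x hs hx).differentiableAt.differentiableWithinAt
    · rw [interior_Ici]
      intro x hx
      have hx0 : (0:ℝ) < x := hx
      rw [(F_hasDerivAt γ s x hs hx0).deriv]
      have hβ0 : γ - 1 < 0 := by linarith
      have hA := incr_mono (γ-1) x hβ0 hx0.le (show x ∈ Ioi (0:ℝ) from hx0)
        (show x + 2*s ∈ Ioi (0:ℝ) by simp only [mem_Ioi]; linarith) (by linarith)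
      simp only at hA
      have e1 : x + 2*s + x = 2*(x+s) := by ring
      have e2 : x + x = 2*x := by ring
      rw [e1, e2, Real.mul_rpow (by norm_num : (0:ℝ) ≤ 2) (show (0:ℝ) ≤ x + s by linarith),
        Real.mul_rpow (by norm_num : (0:ℝ) ≤ 2) hx0.le] at hA
      have h3 : (x + 2*s) ^ (γ-1) + ((2:ℝ) ^ (γ-1) - 1) * x ^ (γ-1)
          - (2:ℝ) ^ (γ-1) * (x + s) ^ (γ-1) ≤ 0 := by nlinarith
      nlinarith
  have h0 : F (t - s) ≤ F 0 :=
    hanti (self_mem_Ici) (show t - s ∈ Ici (0:ℝ) by simp only [mem_Ici]; linarith) (by linarith)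
  have hz : F 0 = 0 := F_zero γ s hγ1 hs
  rw [hz] at h0
  have e1 : t - s + 2*s = t + s := by ring
  have e2 : t - s + s = t := by ring
  simp only [hF, e1, e2] at h0
  linarith

/-- Key upper-bound inequality for `0 < γ < 1` (reversed). -/
lemma up_lt (γ s t : ℝ) (hγ1 : 0 < γ) (hγ2 : γ < 1) (hs : 0 ≤ s) (hst : s ≤ t) :
    (2:ℝ) ^ (γ-1) * (t ^ γ + s ^ γ) ≤ (t + s) ^ γ := by
  set G : ℝ → ℝ := fun u => (2:ℝ) ^ (γ-1) * ((u + s) ^ γ + s ^ γ) - (u + 2*s) ^ γ with hG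
  have hder : ∀ x : ℝ, 0 < x → HasDerivAt G
      ((2:ℝ) ^ (γ-1) * (γ * (x + s) ^ (γ-1)) - γ * (x + 2*s) ^ (γ-1)) x := by
    intro x hx
    have h1 := hasDerivAt_shift_rpow (2*s) γ x (by positivity)
    have h3 := (hasDerivAt_shift_rpow s γ x (by positivity)).add_const (s ^ γ)
    exact (h3.const_mul ((2:ℝ)^(γ-1))).sub h1
  have hanti : AntitoneOn G (Ici 0) := by
    apply antitoneOn_of_deriv_nonpos (convex_Ici 0)
    · exact ((continuous_const.mul ((cont_shift_rpow s γ hγ1).add continuous_const)).sub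
        (cont_shift_rpow (2*s) γ hγ1)).continuousOn
    · rw [interior_Ici]
      exact fun x hx => (hder x hx).differentiableAt.differentiableWithinAt
    · rw [interior_Ici]
      intro x hx
      have hx0 : (0:ℝ) < x := hx
      rw [(hder x hx0).deriv]
      have e1 : (2:ℝ) ^ (γ-1) * (x + s) ^ (γ-1) = (2*(x+s)) ^ (γ-1) :=
        (Real.mul_rpow (by norm_num) (by linarith)).symm
      have hle : (2*(x+s)) ^ (γ-1) ≤ (x + 2*s) ^ (γ-1) :=
        Real.rpow_le_rpow_of_nonpos (by linarith) (by linarith) (by linarith)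
      nlinarith
  have h0 : G (t - s) ≤ G 0 :=
    hanti (self_mem_Ici) (show t - s ∈ Ici (0:ℝ) by simp only [mem_Ici]; linarith) (by linarith)
  have hz : G 0 = 0 := by
    simp only [hG, zero_add]
    rw [Real.mul_rpow (by norm_num) hs, two_rpow_split γ]
    try ring
  rw [hz] at h0
  have e1 : t - s + 2*s = t + s := by ring
  have e2 : t - s + s = t := by ring
  simp only [hG, e1, e2] at h0
  linarith

/-- Two-sided bound for the increment variance of the mgfBm, first case. -/
theorem mgfBm_increment_bounds_case1 (H a b c : ℝ) (hH : H ∈ Set.Ioo (0 : ℝ) 1)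
    (hcase : (1 / 2 < H ∧ 0 ≤ b * c) ∨ (H < 1 / 2 ∧ b * c ≤ 0)) :
    ∀ s t : ℝ, 0 ≤ s → s < t →
      a ^ 2 * (t - s) + (b ^ 2 + c ^ 2 - 2 * b * c * (2 ^ (2 * H - 1) - 1)) * (t - s) ^ (2 * H)
        ≤ a ^ 2 * (t - s) - 2 ^ (2 * H) * b * c * (t ^ (2 * H) + s ^ (2 * H))
            + (b ^ 2 + c ^ 2) * (t - s) ^ (2 * H) + 2 * b * c * (t + s) ^ (2 * H) ∧
      a ^ 2 * (t - s) - 2 ^ (2 * H) * b * c * (t ^ (2 * H) + s ^ (2 * H))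
          + (b ^ 2 + c ^ 2) * (t - s) ^ (2 * H) + 2 * b * c * (t + s) ^ (2 * H)
        ≤ a ^ 2 * (t - s) + (b ^ 2 + c ^ 2) * (t - s) ^ (2 * H) := by
  obtain ⟨hH0, hH1⟩ := hH
  intro s t hs hst
  have hst' : s ≤ t := hst.le
  have h2E : (2:ℝ) ^ (2*H) = 2 ^ (2*H - 1) * 2 := two_rpow_split (2*H)
  rcases hcase with ⟨hH2, hbc⟩ | ⟨hH2, hbc⟩
  · have hk := key_gt (2*H) s t (by linarith) (by linarith) hs hst'
    have hu := up_gt (2*H) s t (by linarith) hs hst'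
    have h1 : 0 ≤ (b*c) * ((t + s) ^ (2*H) + ((2:ℝ) ^ (2*H - 1) - 1) * (t - s) ^ (2*H)
        - (2:ℝ) ^ (2*H - 1) * (t ^ (2*H) + s ^ (2*H))) :=
      mul_nonneg hbc (by linarith)
    have h2 : 0 ≤ (b*c) * ((2:ℝ) ^ (2*H - 1) * (t ^ (2*H) + s ^ (2*H)) - (t + s) ^ (2*H)) :=
      mul_nonneg hbc (by linarith)
    rw [h2E]
    constructor
    · nlinarith [h1]
    · nlinarith [h2]
  · have hk := key_lt (2*H) s t (by linarith) (by linarith) hs hst'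
    have hu := up_lt (2*H) s t (by linarith) (by linarith) hs hst'
    have h1 : 0 ≤ (-(b*c)) * ((2:ℝ) ^ (2*H - 1) * (t ^ (2*H) + s ^ (2*H))
        - ((t + s) ^ (2*H) + ((2:ℝ) ^ (2*H - 1) - 1) * (t - s) ^ (2*H))) :=
      mul_nonneg (by linarith) (by linarith)
    have h2 : 0 ≤ (-(b*c)) * ((t + s) ^ (2*H) - (2:ℝ) ^ (2*H - 1) * (t ^ (2*H) + s ^ (2*H))) :=
      mul_nonneg (by linarith) (by linarith)
    rw [h2E]
    constructor
    · nlinarith [h1]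
    · nlinarith [h2]
end

section
/- Suppose H > 1/2 and bc ≤ 0, or H < 1/2 and bc ≥ 0. Then for all 0 ≤ s < t, a²(t-s) + (b²+c²)(t-s)^{2H} ≤ α(t,s) ≤ a²(t-s) + (b² + c² - 2bc(2^{2H-1}-1))(t-s)^{2H}, where α(t,s) = a²(t-s) - 2^{2H}bc(t^{2H}+s^{2H}) + (b²+c²)(t-s)^{2H} + 2bc(t+s)^{2H}. -/
open Real Set

/-- Derivative of `v ↦ (u+v)^p`. -/
lemma mgf_aux_d1 (p u : ℝ) {v : ℝ} (h : u + v ≠ 0) :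
    HasDerivAt (fun v : ℝ => (u + v) ^ p) (p * (u + v) ^ (p - 1)) v := by
  have h1 : HasDerivAt (fun v : ℝ => u + v) 1 v := (hasDerivAt_id v).const_add u
  simpa using h1.rpow_const (p := p) (Or.inl h)

/-- Derivative of `v ↦ (u-v)^p`. -/
lemma mgf_aux_d2 (p u : ℝ) {v : ℝ} (h : u - v ≠ 0) :
    HasDerivAt (fun v : ℝ => (u - v) ^ p) (-(p * (u - v) ^ (p - 1))) v := by
  have h1 : HasDerivAt (fun v : ℝ => u - v) (-1) v := by
    simpa using (hasDerivAt_id v).const_sub u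
  have := h1.rpow_const (p := p) (Or.inl h)
  convert this using 1
  ring

lemma mgf_aux_sderiv (β : ℝ) {w : ℝ} (hw : 1 < w) :
    HasDerivAt (fun w : ℝ => (w + 1) ^ β - (w - 1) ^ β)
      (β * (w + 1) ^ (β - 1) - β * (w - 1) ^ (β - 1)) w := by
  have h1 : HasDerivAt (fun w : ℝ => w + 1) 1 w := (hasDerivAt_id w).add_const 1
  have h2 : HasDerivAt (fun w : ℝ => w - 1) 1 w := (hasDerivAt_id w).sub_const 1
  have hA := h1.rpow_const (p := β) (Or.inl (by nlinarith))
  have hB := h2.rpow_const (p := β) (Or.inl (by nlinarith))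
  exact (hA.sub hB).congr_deriv (by ring)

/-- For `0 ≤ β ≤ 1`, `w ↦ (w+1)^β - (w-1)^β` is antitone on `(1, ∞)`. -/
lemma mgf_s_anti {β w1 w2 : ℝ} (hβ0 : 0 ≤ β) (hβ1 : β ≤ 1) (h2 : 1 < w2) (h21 : w2 ≤ w1) :
    (w1 + 1) ^ β - (w1 - 1) ^ β ≤ (w2 + 1) ^ β - (w2 - 1) ^ β := by
  have hanti : AntitoneOn (fun w : ℝ => (w + 1) ^ β - (w - 1) ^ β) (Icc w2 w1) := by
    apply antitoneOn_of_deriv_nonpos (convex_Icc _ _)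
    · intro x hx
      exact (mgf_aux_sderiv β (lt_of_lt_of_le h2 hx.1)).continuousAt.continuousWithinAt
    · intro x hx
      rw [interior_Icc] at hx
      exact (mgf_aux_sderiv β (lt_trans h2 hx.1)).differentiableAt.differentiableWithinAt
    · intro x hx
      rw [interior_Icc] at hx
      have hx2 : 1 < x := lt_trans h2 hx.1
      rw [(mgf_aux_sderiv β hx2).deriv]
      have hle : (x + 1) ^ (β - 1) ≤ (x - 1) ^ (β - 1) :=
        Real.rpow_le_rpow_of_nonpos (by linarith) (by linarith) (by linarith)
      nlinarith
  exact hanti ⟨le_refl _, h21⟩ ⟨h21, le_refl _⟩ h21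

/-- For `β ≤ 0`, `w ↦ (w+1)^β - (w-1)^β` is monotone on `(1, ∞)`. -/
lemma mgf_s_mono {β w1 w2 : ℝ} (hβ0 : β ≤ 0) (h2 : 1 < w2) (h21 : w2 ≤ w1) :
    (w2 + 1) ^ β - (w2 - 1) ^ β ≤ (w1 + 1) ^ β - (w1 - 1) ^ β := by
  have hmono : MonotoneOn (fun w : ℝ => (w + 1) ^ β - (w - 1) ^ β) (Icc w2 w1) := by
    apply monotoneOn_of_deriv_nonneg (convex_Icc _ _)
    · intro x hx
      exact (mgf_aux_sderiv β (lt_of_lt_of_le h2 hx.1)).continuousAt.continuousWithinAt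
    · intro x hx
      rw [interior_Icc] at hx
      exact (mgf_aux_sderiv β (lt_trans h2 hx.1)).differentiableAt.differentiableWithinAt
    · intro x hx
      rw [interior_Icc] at hx
      have hx2 : 1 < x := lt_trans h2 hx.1
      rw [(mgf_aux_sderiv β hx2).deriv]
      have hle : (x + 1) ^ (β - 1) ≤ (x - 1) ^ (β - 1) :=
        Real.rpow_le_rpow_of_nonpos (by linarith) (by linarith) (by linarith)
      nlinarith
  exact hmono ⟨le_refl _, h21⟩ ⟨h21, le_refl _⟩ h21

lemma mgf_rho_factor (β C u : ℝ) {v : ℝ} (hv : 0 < v) (hvu : v < u) :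
    (u + v) ^ β - (u - v) ^ β - C * v ^ β
      = v ^ β * ((u / v + 1) ^ β - (u / v - 1) ^ β - C) := by
  have hw : (1:ℝ) < u / v := (one_lt_div hv).2 hvu
  have h1 : u + v = v * (u / v + 1) := by field_simp
  have h2 : u - v = v * (u / v - 1) := by field_simp
  rw [h1, h2, Real.mul_rpow hv.le (by linarith), Real.mul_rpow hv.le (by linarith)]
  ring

/-- Single crossing (upward) for `ρ` when `0 ≤ β ≤ 1`. -/
lemma mgf_cross_up (β C u : ℝ) (hβ0 : 0 ≤ β) (hβ1 : β ≤ 1) {x y : ℝ} (hx : 0 < x)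
    (hxy : x ≤ y) (hyu : y < u)
    (h : 0 ≤ (u + x) ^ β - (u - x) ^ β - C * x ^ β) :
    0 ≤ (u + y) ^ β - (u - y) ^ β - C * y ^ β := by
  have hy : 0 < y := lt_of_lt_of_le hx hxy
  have hxu : x < u := lt_of_le_of_lt hxy hyu
  rw [mgf_rho_factor β C u hx hxu] at h
  rw [mgf_rho_factor β C u hy hyu]
  have hwy : (1:ℝ) < u / y := (one_lt_div hy).2 hyu
  have hw : u / y ≤ u / x := div_le_div_of_nonneg_left (by linarith) hx hxy
  have hpx : (0:ℝ) < x ^ β := Real.rpow_pos_of_pos hx β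
  have hBx : 0 ≤ (u / x + 1) ^ β - (u / x - 1) ^ β - C := by
    by_contra hneg
    push_neg at hneg
    nlinarith
  have hs := mgf_s_anti hβ0 hβ1 hwy hw
  have hpy : (0:ℝ) ≤ y ^ β := (Real.rpow_pos_of_pos hy β).le
  have : 0 ≤ (u / y + 1) ^ β - (u / y - 1) ^ β - C := by linarith
  exact mul_nonneg hpy this

/-- Single crossing (downward) for `ρ` when `β ≤ 0`. -/
lemma mgf_cross_down (β C u : ℝ) (hβ0 : β ≤ 0) {x y : ℝ} (hx : 0 < x)
    (hxy : x ≤ y) (hyu : y < u)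
    (h : 0 ≤ (u + y) ^ β - (u - y) ^ β - C * y ^ β) :
    0 ≤ (u + x) ^ β - (u - x) ^ β - C * x ^ β := by
  have hy : 0 < y := lt_of_lt_of_le hx hxy
  have hxu : x < u := lt_of_le_of_lt hxy hyu
  rw [mgf_rho_factor β C u hy hyu] at h
  rw [mgf_rho_factor β C u hx hxu]
  have hwy : (1:ℝ) < u / y := (one_lt_div hy).2 hyu
  have hw : u / y ≤ u / x := div_le_div_of_nonneg_left (by linarith) hx hxy
  have hpy : (0:ℝ) < y ^ β := Real.rpow_pos_of_pos hy β
  have hBy : 0 ≤ (u / y + 1) ^ β - (u / y - 1) ^ β - C := by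
    by_contra hneg
    push_neg at hneg
    nlinarith
  have hs := mgf_s_mono hβ0 hwy hw
  have hpx : (0:ℝ) ≤ x ^ β := (Real.rpow_pos_of_pos hx β).le
  have : 0 ≤ (u / x + 1) ^ β - (u / x - 1) ^ β - C := by linarith
  exact mul_nonneg hpx this

lemma mgf_phi_deriv (γ C u : ℝ) {v : ℝ} (h1 : u + v ≠ 0) (h2 : u - v ≠ 0) (h3 : v ≠ 0) :
    HasDerivAt (fun v : ℝ => (u + v) ^ γ + (u - v) ^ γ - 2 * u ^ γ - C * v ^ γ)
      (γ * ((u + v) ^ (γ - 1) - (u - v) ^ (γ - 1) - C * v ^ (γ - 1))) v := by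
  have hA := mgf_aux_d1 γ u h1
  have hB := mgf_aux_d2 γ u h2
  have hC : HasDerivAt (fun v : ℝ => v ^ γ) (γ * v ^ (γ - 1)) v :=
    Real.hasDerivAt_rpow_const (Or.inl h3)
  have := ((hA.add hB).sub_const (2 * u ^ γ)).sub (hC.const_mul C)
  exact this.congr_deriv (by ring)

lemma mgf_phi_cont (γ C u : ℝ) (hγ : 0 < γ) :
    Continuous (fun v : ℝ => (u + v) ^ γ + (u - v) ^ γ - 2 * u ^ γ - C * v ^ γ) := by
  have c1 : Continuous fun v : ℝ => (u + v) ^ γ :=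
    (continuous_const.add continuous_id).rpow_const (fun x => Or.inr hγ.le)
  have c2 : Continuous fun v : ℝ => (u - v) ^ γ :=
    (continuous_const.sub continuous_id).rpow_const (fun x => Or.inr hγ.le)
  have c3 : Continuous fun v : ℝ => v ^ γ :=
    continuous_id.rpow_const (fun x => Or.inr hγ.le)
  exact ((c1.add c2).sub continuous_const).sub (continuous_const.mul c3)

lemma mgf_phi_zero (γ C u : ℝ) (hγ : γ ≠ 0) :
    (u + 0) ^ γ + (u - 0) ^ γ - 2 * u ^ γ - C * (0:ℝ) ^ γ = 0 := by
  rw [add_zero, sub_zero, Real.zero_rpow hγ]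
  ring

lemma mgf_phi_top (γ C u : ℝ) (hγ : γ ≠ 0) (hu : 0 ≤ u) (hC : C = (2:ℝ) ^ γ - 2) :
    (u + u) ^ γ + (u - u) ^ γ - 2 * u ^ γ - C * u ^ γ = 0 := by
  have h2 : u + u = 2 * u := by ring
  rw [h2, Real.mul_rpow (by norm_num) hu, sub_self, Real.zero_rpow hγ, hC]
  ring

/-- The key inequality for `1 < γ < 2`. -/
lemma mgf_phi_nonpos (γ u : ℝ) (hγ1 : 1 < γ) (hγ2 : γ < 2) (hu : 0 < u) {v : ℝ}
    (hv : 0 ≤ v) (hvu : v ≤ u) :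
    (u + v) ^ γ + (u - v) ^ γ - 2 * u ^ γ - ((2:ℝ) ^ γ - 2) * v ^ γ ≤ 0 := by
  set C : ℝ := (2:ℝ) ^ γ - 2 with hCdef
  set φ : ℝ → ℝ := fun v => (u + v) ^ γ + (u - v) ^ γ - 2 * u ^ γ - C * v ^ γ with hφ
  have hγ0 : (0:ℝ) < γ := by linarith
  have hγne : γ ≠ 0 := ne_of_gt hγ0
  have hφ0 : φ 0 = 0 := mgf_phi_zero γ C u hγne
  have hφu : φ u = 0 := mgf_phi_top γ C u hγne hu.le rfl
  show φ v ≤ 0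
  rcases eq_or_lt_of_le hv with h0 | h0
  · rw [← h0]; exact le_of_eq hφ0
  rcases eq_or_lt_of_le hvu with h1 | h1
  · rw [h1]; exact le_of_eq hφu
  by_cases hc : ∀ x ∈ Ioo (0:ℝ) v, (u + x) ^ (γ-1) - (u - x) ^ (γ-1) - C * x ^ (γ-1) ≤ 0
  · have hanti : AntitoneOn φ (Icc 0 v) := by
      apply antitoneOn_of_deriv_nonpos (convex_Icc _ _) (mgf_phi_cont γ C u hγ0).continuousOn
      · intro x hx
        rw [interior_Icc] at hx
        exact (mgf_phi_deriv γ C u (by nlinarith [hx.1]) (by nlinarith [hx.2, h1])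
          (ne_of_gt hx.1)).differentiableAt.differentiableWithinAt
      · intro x hx
        rw [interior_Icc] at hx
        rw [(mgf_phi_deriv γ C u (by nlinarith [hx.1]) (by nlinarith [hx.2, h1])
          (ne_of_gt hx.1)).deriv]
        have := hc x hx
        nlinarith
    have := hanti (left_mem_Icc.2 hv) (right_mem_Icc.2 hv) hv
    linarith
  · push_neg at hc
    obtain ⟨x, hxmem, hxpos⟩ := hc
    have hmono : MonotoneOn φ (Icc v u) := by
      apply monotoneOn_of_deriv_nonneg (convex_Icc _ _) (mgf_phi_cont γ C u hγ0).continuousOn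
      · intro y hy
        rw [interior_Icc] at hy
        have hy0 : 0 < y := lt_trans h0 hy.1
        exact (mgf_phi_deriv γ C u (by nlinarith) (by nlinarith [hy.2])
          (ne_of_gt hy0)).differentiableAt.differentiableWithinAt
      · intro y hy
        rw [interior_Icc] at hy
        have hy0 : 0 < y := lt_trans h0 hy.1
        rw [(mgf_phi_deriv γ C u (by nlinarith) (by nlinarith [hy.2]) (ne_of_gt hy0)).deriv]
        have hρ : 0 ≤ (u + y) ^ (γ-1) - (u - y) ^ (γ-1) - C * y ^ (γ-1) :=
          mgf_cross_up (γ-1) C u (by linarith) (by linarith) hxmem.1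
            (le_of_lt (lt_trans hxmem.2 hy.1)) hy.2 hxpos.le
        nlinarith
    have := hmono (left_mem_Icc.2 hvu) (right_mem_Icc.2 hvu) hvu
    linarith

/-- The key inequality for `0 < γ < 1`. -/
lemma mgf_phi_nonneg (γ u : ℝ) (hγ1 : 0 < γ) (hγ2 : γ < 1) (hu : 0 < u) {v : ℝ}
    (hv : 0 ≤ v) (hvu : v ≤ u) :
    0 ≤ (u + v) ^ γ + (u - v) ^ γ - 2 * u ^ γ - ((2:ℝ) ^ γ - 2) * v ^ γ := by
  set C : ℝ := (2:ℝ) ^ γ - 2 with hCdef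
  set φ : ℝ → ℝ := fun v => (u + v) ^ γ + (u - v) ^ γ - 2 * u ^ γ - C * v ^ γ with hφ
  have hγne : γ ≠ 0 := ne_of_gt hγ1
  have hφ0 : φ 0 = 0 := mgf_phi_zero γ C u hγne
  have hφu : φ u = 0 := mgf_phi_top γ C u hγne hu.le rfl
  show 0 ≤ φ v
  rcases eq_or_lt_of_le hv with h0 | h0
  · rw [← h0]; exact le_of_eq hφ0.symm
  rcases eq_or_lt_of_le hvu with h1 | h1
  · rw [h1]; exact le_of_eq hφu.symm
  by_cases hc : ∀ y ∈ Ioo v u, (u + y) ^ (γ-1) - (u - y) ^ (γ-1) - C * y ^ (γ-1) ≤ 0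
  · have hanti : AntitoneOn φ (Icc v u) := by
      apply antitoneOn_of_deriv_nonpos (convex_Icc _ _) (mgf_phi_cont γ C u hγ1).continuousOn
      · intro y hy
        rw [interior_Icc] at hy
        have hy0 : 0 < y := lt_trans h0 hy.1
        exact (mgf_phi_deriv γ C u (by nlinarith) (by nlinarith [hy.2])
          (ne_of_gt hy0)).differentiableAt.differentiableWithinAt
      · intro y hy
        rw [interior_Icc] at hy
        have hy0 : 0 < y := lt_trans h0 hy.1
        rw [(mgf_phi_deriv γ C u (by nlinarith) (by nlinarith [hy.2]) (ne_of_gt hy0)).deriv]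
        have := hc y hy
        nlinarith
    have := hanti (left_mem_Icc.2 hvu) (right_mem_Icc.2 hvu) hvu
    linarith
  · push_neg at hc
    obtain ⟨y, hymem, hypos⟩ := hc
    have hmono : MonotoneOn φ (Icc 0 v) := by
      apply monotoneOn_of_deriv_nonneg (convex_Icc _ _) (mgf_phi_cont γ C u hγ1).continuousOn
      · intro x hx
        rw [interior_Icc] at hx
        exact (mgf_phi_deriv γ C u (by nlinarith [hx.1]) (by nlinarith [hx.2, h1])
          (ne_of_gt hx.1)).differentiableAt.differentiableWithinAt
      · intro x hx
        rw [interior_Icc] at hx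
        rw [(mgf_phi_deriv γ C u (by nlinarith [hx.1]) (by nlinarith [hx.2, h1])
          (ne_of_gt hx.1)).deriv]
        have hρ : 0 ≤ (u + x) ^ (γ-1) - (u - x) ^ (γ-1) - C * x ^ (γ-1) :=
          mgf_cross_down (γ-1) C u (by linarith) hx.1
            (le_of_lt (lt_trans hx.2 hymem.1)) hymem.2 hypos.le
        nlinarith
    have := hmono (left_mem_Icc.2 hv) (right_mem_Icc.2 hv) hv
    linarith

lemma mgf_psi_cont (γ u : ℝ) (hγ : 0 < γ) :
    Continuous (fun v : ℝ => (u + v) ^ γ + (u - v) ^ γ) := by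
  have c1 : Continuous fun v : ℝ => (u + v) ^ γ :=
    (continuous_const.add continuous_id).rpow_const (fun x => Or.inr hγ.le)
  have c2 : Continuous fun v : ℝ => (u - v) ^ γ :=
    (continuous_const.sub continuous_id).rpow_const (fun x => Or.inr hγ.le)
  exact c1.add c2

lemma mgf_psi_ge (γ u : ℝ) (hγ : 1 ≤ γ) (hu : 0 < u) {v : ℝ} (hv : 0 ≤ v) (hvu : v ≤ u) :
    2 * u ^ γ ≤ (u + v) ^ γ + (u - v) ^ γ := by
  have hγ0 : (0:ℝ) < γ := by linarith
  have hmono : MonotoneOn (fun v : ℝ => (u + v) ^ γ + (u - v) ^ γ) (Icc 0 u) := by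
    apply monotoneOn_of_deriv_nonneg (convex_Icc _ _) (mgf_psi_cont γ u hγ0).continuousOn
    · intro x hx
      rw [interior_Icc] at hx
      exact ((mgf_aux_d1 γ u (by nlinarith [hx.1])).add
        (mgf_aux_d2 γ u (by nlinarith [hx.2]))).differentiableAt.differentiableWithinAt
    · intro x hx
      rw [interior_Icc] at hx
      show 0 ≤ deriv ((fun v : ℝ => (u + v) ^ γ) + fun v => (u - v) ^ γ) x
      rw [((mgf_aux_d1 γ u (v := x) (by nlinarith [hx.1])).add
        (mgf_aux_d2 γ u (v := x) (by nlinarith [hx.2]))).deriv]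
      have := Real.rpow_le_rpow (by linarith [hx.1, hx.2] : (0:ℝ) ≤ u - x)
        (by linarith [hx.1] : u - x ≤ u + x) (by linarith : (0:ℝ) ≤ γ - 1)
      nlinarith
  have h := hmono (left_mem_Icc.2 hu.le) ⟨hv, hvu⟩ hv
  simp only [add_zero, sub_zero] at h
  linarith

lemma mgf_psi_le (γ u : ℝ) (hγ0 : 0 < γ) (hγ : γ ≤ 1) (hu : 0 < u) {v : ℝ}
    (hv : 0 ≤ v) (hvu : v ≤ u) :
    (u + v) ^ γ + (u - v) ^ γ ≤ 2 * u ^ γ := by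
  have hanti : AntitoneOn (fun v : ℝ => (u + v) ^ γ + (u - v) ^ γ) (Icc 0 u) := by
    apply antitoneOn_of_deriv_nonpos (convex_Icc _ _) (mgf_psi_cont γ u hγ0).continuousOn
    · intro x hx
      rw [interior_Icc] at hx
      exact ((mgf_aux_d1 γ u (by nlinarith [hx.1])).add
        (mgf_aux_d2 γ u (by nlinarith [hx.2]))).differentiableAt.differentiableWithinAt
    · intro x hx
      rw [interior_Icc] at hx
      show deriv ((fun v : ℝ => (u + v) ^ γ) + fun v => (u - v) ^ γ) x ≤ 0
      rw [((mgf_aux_d1 γ u (v := x) (by nlinarith [hx.1])).add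
        (mgf_aux_d2 γ u (v := x) (by nlinarith [hx.2]))).deriv]
      have := Real.rpow_le_rpow_of_nonpos (by linarith [hx.1, hx.2] : (0:ℝ) < u - x)
        (by linarith [hx.1] : u - x ≤ u + x) (by linarith : γ - 1 ≤ 0)
      nlinarith
  have h := hanti (left_mem_Icc.2 hu.le) ⟨hv, hvu⟩ hv
  simp only [add_zero, sub_zero] at h
  linarith

/-- Two-sided bound for the increment variance of the mgfBm, second case. -/
theorem mgfBm_increment_bounds_case2 (H a b c : ℝ) (hH : H ∈ Set.Ioo (0 : ℝ) 1)
    (hcase : (1 / 2 < H ∧ b * c ≤ 0) ∨ (H < 1 / 2 ∧ 0 ≤ b * c)) :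
    ∀ s t : ℝ, 0 ≤ s → s < t →
      a ^ 2 * (t - s) + (b ^ 2 + c ^ 2) * (t - s) ^ (2 * H)
        ≤ a ^ 2 * (t - s) - 2 ^ (2 * H) * b * c * (t ^ (2 * H) + s ^ (2 * H))
            + (b ^ 2 + c ^ 2) * (t - s) ^ (2 * H) + 2 * b * c * (t + s) ^ (2 * H) ∧
      a ^ 2 * (t - s) - 2 ^ (2 * H) * b * c * (t ^ (2 * H) + s ^ (2 * H))
          + (b ^ 2 + c ^ 2) * (t - s) ^ (2 * H) + 2 * b * c * (t + s) ^ (2 * H)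
        ≤ a ^ 2 * (t - s)
            + (b ^ 2 + c ^ 2 - 2 * b * c * (2 ^ (2 * H - 1) - 1)) * (t - s) ^ (2 * H) := by
  obtain ⟨hH0, hH1⟩ := hH
  intro s t hs hst
  set u : ℝ := (t + s) / 2 with hudef
  set v : ℝ := (t - s) / 2 with hvdef
  have hu : 0 < u := by simp only [hudef]; linarith
  have hv : 0 < v := by simp only [hvdef]; linarith
  have hvu : v ≤ u := by simp only [hudef, hvdef]; linarith
  have ht : t = u + v := by simp only [hudef, hvdef]; ring
  have hs' : s = u - v := by simp only [hudef, hvdef]; ring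
  have hts : t + s = 2 * u := by simp only [hudef]; ring
  have hts2 : t - s = 2 * v := by simp only [hvdef]; ring
  have e1 : (t + s) ^ (2 * H) = 2 ^ (2 * H) * u ^ (2 * H) := by
    rw [hts, Real.mul_rpow (by norm_num) hu.le]
  have e2 : (t - s) ^ (2 * H) = 2 ^ (2 * H) * v ^ (2 * H) := by
    rw [hts2, Real.mul_rpow (by norm_num) hv.le]
  have e3 : t ^ (2 * H) = (u + v) ^ (2 * H) := by rw [← ht]
  have e4 : s ^ (2 * H) = (u - v) ^ (2 * H) := by rw [← hs']
  have h2γ : (2:ℝ) ^ (2 * H) = 2 * (2:ℝ) ^ (2 * H - 1) := by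
    have h := Real.rpow_add (show (0:ℝ) < 2 by norm_num) 1 (2 * H - 1)
    rw [Real.rpow_one] at h
    rw [← h]
    congr 1
    ring
  have hA : (0:ℝ) < 2 ^ (2 * H) := Real.rpow_pos_of_pos (by norm_num) _
  have p1 : 0 ≤ b * c * (2 * u ^ (2 * H) - ((u + v) ^ (2 * H) + (u - v) ^ (2 * H))) := by
    rcases hcase with ⟨hH2, hbc⟩ | ⟨hH2, hbc⟩
    · have := mgf_psi_ge (2 * H) u (by linarith) hu hv.le hvu
      exact mul_nonneg_of_nonpos_of_nonpos hbc (by linarith)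
    · have := mgf_psi_le (2 * H) u (by linarith) (by linarith) hu hv.le hvu
      exact mul_nonneg hbc (by linarith)
  have p2 : 0 ≤ b * c * ((u + v) ^ (2 * H) + (u - v) ^ (2 * H) - 2 * u ^ (2 * H)
      - (2 * (2:ℝ) ^ (2 * H - 1) - 2) * v ^ (2 * H)) := by
    rw [← h2γ]
    rcases hcase with ⟨hH2, hbc⟩ | ⟨hH2, hbc⟩
    · have := mgf_phi_nonpos (2 * H) u (by linarith) (by linarith) hu hv.le hvu
      exact mul_nonneg_of_nonpos_of_nonpos hbc (by linarith)
    · have := mgf_phi_nonneg (2 * H) u (by linarith) (by linarith) hu hv.le hvu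
      exact mul_nonneg hbc (by linarith)
  have q1 := mul_nonneg hA.le p1
  have q2 := mul_nonneg hA.le p2
  rw [e1, e2, e3, e4]
  constructor
  · nlinarith [q1]
  · nlinarith [q2]
end

section
/- Let H ∈ (1/2, 1) and b ≠ c. Define R_M(p,p+n) = ((b²+c²)/2)((n+1)^{2H} - 2n^{2H} + (n-1)^{2H}) - bc((2p+n+2)^{2H} - 2(2p+n+1)^{2H} + (2p+n)^{2H}) for integers p,n ≥ 1. Then for every fixed p ≥ 1, R_M(p,p+n) ~ H(2H-1)(b-c)² n^{2H-2} as n → ∞, and the series Σ_{n≥1} R_M(p,p+n) diverges. -/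
open Filter Set

lemma mvt_rpow (r x y : ℝ) (hx : 0 < x) (hxy : x < y) :
    ∃ ξ ∈ Set.Ioo x y, y ^ r - x ^ r = r * ξ ^ (r - 1) * (y - x) := by
  obtain ⟨ξ, hξ, h⟩ := exists_hasDerivAt_eq_slope (fun t => t ^ r)
    (fun t => r * t ^ (r - 1)) hxy
    (fun t ht => (Real.continuousAt_rpow_const t r
      (Or.inl (ne_of_gt (lt_of_lt_of_le hx ht.1)))).continuousWithinAt)
    (fun t ht => Real.hasDerivAt_rpow_const (Or.inl (ne_of_gt (hx.trans ht.1))))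
  rw [eq_div_iff (by linarith : y - x ≠ 0)] at h
  exact ⟨ξ, hξ, h.symm⟩

/-- Second difference of `x ^ a`. -/
noncomputable def sd (a m : ℝ) : ℝ := (m + 1) ^ a - 2 * m ^ a + (m - 1) ^ a

lemma secondDiff_eq (a m : ℝ) (ha : 0 < a) (hm : 1 ≤ m) :
    ∃ η, m - 1 < η ∧ η < m + 1 ∧ 0 < η ∧ sd a m = a * (a - 1) * η ^ (a - 2) := by
  have h1 : m - 1 < m := by linarith
  obtain ⟨ξ, hξ, h⟩ := exists_hasDerivAt_eq_slope (fun x => (x + 1) ^ a - x ^ a)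
    (fun x => 1 * a * (x + 1) ^ (a - 1) - 1 * a * x ^ (a - 1)) h1
    (Continuous.continuousOn (((Real.continuous_rpow_const ha.le).comp
        (continuous_id.add continuous_const)).sub (Real.continuous_rpow_const ha.le)))
    (fun x hx => (((hasDerivAt_id' (𝕜 := ℝ) x).add_const 1).rpow_const
        (Or.inl (by intro hc; nlinarith [hx.1, hx.2] : x + 1 ≠ 0))).sub
      ((hasDerivAt_id' (𝕜 := ℝ) x).rpow_const
        (Or.inl (ne_of_gt (lt_of_le_of_lt (by linarith) hx.1)))))
  have hξ0 : 0 < ξ := lt_of_le_of_lt (by linarith) hξ.1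
  obtain ⟨η, hη, h2⟩ := mvt_rpow (a - 1) ξ (ξ + 1) hξ0 (by linarith)
  refine ⟨η, by linarith [hη.1, hξ.1], by linarith [hη.2, hξ.2], by linarith [hη.1], ?_⟩
  have hne : m - (m - 1) = (1:ℝ) := by ring
  rw [hne, div_one] at h
  have key : sd a m = a * ((ξ + 1) ^ (a - 1) - ξ ^ (a - 1)) := by
    have := h.symm
    unfold sd
    ring_nf at this ⊢
    linarith [this]
  rw [key]
  have h2' : (ξ + 1) ^ (a - 1) - ξ ^ (a - 1) = (a - 1) * η ^ (a - 1 - 1) * 1 := by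
    simpa using h2
  rw [h2']
  ring_nf

lemma sd_lower (a m : ℝ) (ha1 : 1 < a) (ha2 : a < 2) (hm : 1 ≤ m) :
    a * (a - 1) * (m + 1) ^ (a - 2) ≤ sd a m := by
  obtain ⟨η, h1, h2, h0, heq⟩ := secondDiff_eq a m (by linarith) hm
  rw [heq]
  have h := Real.rpow_le_rpow_of_nonpos h0 h2.le (by linarith : a - 2 ≤ 0)
  have ha : (0:ℝ) ≤ a * (a - 1) := by nlinarith
  exact mul_le_mul_of_nonneg_left h ha

lemma sd_upper (a m : ℝ) (ha1 : 1 < a) (ha2 : a < 2) (hm : 1 < m) :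
    sd a m ≤ a * (a - 1) * (m - 1) ^ (a - 2) := by
  obtain ⟨η, h1, h2, h0, heq⟩ := secondDiff_eq a m (by linarith) hm.le
  rw [heq]
  have := Real.rpow_le_rpow_of_nonpos (by linarith : (0:ℝ) < m - 1) h1.le
    (by linarith : a - 2 ≤ 0)
  have ha : (0:ℝ) ≤ a * (a - 1) := by nlinarith
  exact mul_le_mul_of_nonneg_left this ha

/-- Long-range dependence of mgfBm increments for `H > 1/2` and `b ≠ c`. -/
theorem mgfBm_long_range_dependence (H b c : ℝ) (hH : H ∈ Set.Ioo (1 / 2 : ℝ) 1)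
    (hbc : b ≠ c) (R : ℕ → ℕ → ℝ)
    (hR : ∀ p n : ℕ,
      R p n = (b ^ 2 + c ^ 2) / 2 *
          (((n : ℝ) + 1) ^ (2 * H) - 2 * (n : ℝ) ^ (2 * H) + ((n : ℝ) - 1) ^ (2 * H))
        - b * c *
          ((2 * (p : ℝ) + n + 2) ^ (2 * H) - 2 * (2 * (p : ℝ) + n + 1) ^ (2 * H)
            + (2 * (p : ℝ) + n) ^ (2 * H))) :
    ∀ p : ℕ, 1 ≤ p →
      Tendsto (fun n : ℕ =>
          R p n / (H * (2 * H - 1) * (b - c) ^ 2 * (n : ℝ) ^ (2 * H - 2)))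
        atTop (nhds 1) ∧
      Tendsto (fun N : ℕ => ∑ n ∈ Finset.Icc 1 N, R p n) atTop atTop := by
  obtain ⟨hH1, hH2⟩ := hH
  have ha1 : (1:ℝ) < 2 * H := by linarith
  have ha2 : (2:ℝ) * H < 2 := by linarith
  have hK : (0:ℝ) < 2 * H * (2 * H - 1) := by nlinarith
  intro p hp
  have hp1 : (1:ℝ) ≤ (p : ℝ) := by exact_mod_cast hp
  -- rewrite R in terms of sd
  have hRD : ∀ n : ℕ, R p n = (b ^ 2 + c ^ 2) / 2 * sd (2 * H) n
      - b * c * sd (2 * H) ((n : ℝ) + (2 * (p : ℝ) + 1)) := by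
    intro n
    have e1 : ((n:ℝ) + (2 * (p:ℝ) + 1)) + 1 = 2 * (p:ℝ) + n + 2 := by ring
    have e2 : ((n:ℝ) + (2 * (p:ℝ) + 1)) - 1 = 2 * (p:ℝ) + n := by ring
    have e3 : ((n:ℝ) + (2 * (p:ℝ) + 1)) = 2 * (p:ℝ) + n + 1 := by ring
    rw [hR]
    unfold sd
    rw [e1, e2, e3]
  -- base limits
  have hbase : ∀ k : ℝ, Tendsto (fun n : ℕ => (((n:ℝ) + k) / n) ^ (2 * H - 2))
      atTop (nhds 1) := by
    intro k
    have h1 : Tendsto (fun n : ℕ => 1 + k * (1 / (n:ℝ))) atTop (nhds 1) := by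
      have : Tendsto (fun n : ℕ => 1 / (n:ℝ)) atTop (nhds 0) := tendsto_one_div_atTop_nhds_zero_nat
      simpa using tendsto_const_nhds.add (this.const_mul k)
    have h0 : Tendsto (fun n : ℕ => ((n:ℝ) + k) / n) atTop (nhds 1) := by
      refine h1.congr' ?_
      filter_upwards [eventually_ge_atTop 1] with n hn
      have hn0 : (n:ℝ) ≠ 0 := Nat.cast_ne_zero.mpr (by omega)
      field_simp
    have := (Real.continuousAt_rpow_const 1 (2 * H - 2) (Or.inl one_ne_zero)).tendsto.comp h0
    simpa [Function.comp_def] using this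
  -- the generic squeeze
  have hgen : ∀ k : ℝ, 0 ≤ k →
      Tendsto (fun n : ℕ => sd (2 * H) ((n:ℝ) + k) / (n:ℝ) ^ (2 * H - 2))
        atTop (nhds (2 * H * (2 * H - 1))) := by
    intro k hk
    have hlow := (hbase (k + 1)).const_mul (2 * H * (2 * H - 1))
    have hhigh := (hbase (k - 1)).const_mul (2 * H * (2 * H - 1))
    rw [mul_one] at hlow hhigh
    refine tendsto_of_tendsto_of_tendsto_of_le_of_le' hlow hhigh ?_ ?_
    · filter_upwards [eventually_ge_atTop 2] with n hn
      have hn2 : (2:ℝ) ≤ n := by exact_mod_cast hn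
      have hnp : (0:ℝ) < (n:ℝ) ^ (2 * H - 2) := Real.rpow_pos_of_pos (by linarith) _
      rw [le_div_iff₀ hnp, mul_assoc]
      have key : (((n:ℝ) + (k + 1)) / n) ^ (2 * H - 2) * (n:ℝ) ^ (2 * H - 2)
          = (((n:ℝ) + k) + 1) ^ (2 * H - 2) := by
        rw [← Real.mul_rpow (div_nonneg (by linarith) (by linarith)) (by linarith)]
        congr 1
        field_simp
        ring
      rw [key]
      exact sd_lower (2 * H) ((n:ℝ) + k) ha1 ha2 (by linarith)
    · filter_upwards [eventually_ge_atTop 2] with n hn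
      have hn2 : (2:ℝ) ≤ n := by exact_mod_cast hn
      have hnp : (0:ℝ) < (n:ℝ) ^ (2 * H - 2) := Real.rpow_pos_of_pos (by linarith) _
      rw [div_le_iff₀ hnp, mul_assoc]
      have key : (((n:ℝ) + (k - 1)) / n) ^ (2 * H - 2) * (n:ℝ) ^ (2 * H - 2)
          = (((n:ℝ) + k) - 1) ^ (2 * H - 2) := by
        rw [← Real.mul_rpow (div_nonneg (by linarith) (by linarith)) (by linarith)]
        congr 1
        field_simp
        ring
      rw [key]
      exact sd_upper (2 * H) ((n:ℝ) + k) ha1 ha2 (by linarith)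
  have hA : Tendsto (fun n : ℕ => sd (2 * H) (n:ℝ) / (n:ℝ) ^ (2 * H - 2))
      atTop (nhds (2 * H * (2 * H - 1))) := by
    have := hgen 0 le_rfl
    simpa using this
  have hB := hgen (2 * (p:ℝ) + 1) (by linarith)
  constructor
  · -- the limit statement
    have hbc' : b - c ≠ 0 := sub_ne_zero.mpr hbc
    have hc0 : H * (2 * H - 1) * (b - c) ^ 2 ≠ 0 := by
      have hsq : (0:ℝ) < (b - c) ^ 2 :=
        lt_of_le_of_ne (sq_nonneg _) (Ne.symm (pow_ne_zero 2 hbc'))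
      have : (0:ℝ) < H * (2 * H - 1) * (b - c) ^ 2 :=
        mul_pos (mul_pos (by linarith) (by linarith)) hsq
      exact this.ne'
    have hlim := ((hA.const_mul ((b ^ 2 + c ^ 2) / 2)).sub
      (hB.const_mul (b * c))).div_const (H * (2 * H - 1) * (b - c) ^ 2)
    have hval : ((b ^ 2 + c ^ 2) / 2 * (2 * H * (2 * H - 1))
        - b * c * (2 * H * (2 * H - 1))) / (H * (2 * H - 1) * (b - c) ^ 2) = 1 := by
      rw [div_eq_one_iff_eq hc0]
      ring
    rw [hval] at hlim
    refine hlim.congr fun n => ?_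
    rw [hRD n]
    rcases eq_or_ne ((n:ℝ) ^ (2 * H - 2)) 0 with h | h
    · rw [h]; simp
    · field_simp
  · -- divergence
    set C1 : ℝ := (b - c) ^ 2 / 2 * (2 * H * (2 * H - 1)) / (2 * (p:ℝ) + 3) with hC1def
    have hbc' : b - c ≠ 0 := sub_ne_zero.mpr hbc
    have hC1 : 0 < C1 := by
      have h1 : (0:ℝ) < (b - c) ^ 2 := by positivity
      have h2 : (0:ℝ) < 2 * (p:ℝ) + 3 := by linarith
      rw [hC1def]
      exact div_pos (mul_pos (by positivity) hK) h2
    have hterm : ∀ n : ℕ, 1 ≤ n → C1 * (1 / (n:ℝ)) ≤ R p n := by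
      intro n hn
      have hn1 : (1:ℝ) ≤ (n:ℝ) := by exact_mod_cast hn
      set m : ℝ := (n:ℝ) + (2 * (p:ℝ) + 1) with hmdef
      have hm1 : 1 < m := by rw [hmdef]; linarith
      have hlow_m := sd_lower (2 * H) m ha1 ha2 hm1.le
      have hlow_n := sd_lower (2 * H) (n:ℝ) ha1 ha2 hn1
      have hup_m := sd_upper (2 * H) m ha1 ha2 hm1
      have hcmp : (m - 1) ^ (2 * H - 2) ≤ ((n:ℝ) + 1) ^ (2 * H - 2) := by
        refine Real.rpow_le_rpow_of_nonpos (by linarith) ?_ (by linarith)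
        rw [hmdef]; linarith
      have hDmn : sd (2 * H) m ≤ sd (2 * H) (n:ℝ) := by
        calc sd (2 * H) m ≤ 2 * H * (2 * H - 1) * (m - 1) ^ (2 * H - 2) := hup_m
          _ ≤ 2 * H * (2 * H - 1) * ((n:ℝ) + 1) ^ (2 * H - 2) :=
            mul_le_mul_of_nonneg_left hcmp hK.le
          _ ≤ sd (2 * H) (n:ℝ) := hlow_n
      have hstep1 : (b - c) ^ 2 / 2 * sd (2 * H) m ≤ R p n := by
        rw [hRD n, ← hmdef]
        nlinarith [hDmn, sq_nonneg b, sq_nonneg c, sq_nonneg (b + c)]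
      have hexp : (m + 1) ^ ((-1:ℝ)) ≤ (m + 1) ^ (2 * H - 2) :=
        Real.rpow_le_rpow_of_exponent_le (by linarith) (by linarith)
      have hinv : (m + 1) ^ ((-1:ℝ)) = 1 / (m + 1) := by
        rw [Real.rpow_neg_one]; exact inv_eq_one_div _
      have hfrac : (1 / (2 * (p:ℝ) + 3)) * (1 / (n:ℝ)) ≤ 1 / (m + 1) := by
        rw [hmdef, div_mul_div_comm, one_mul, div_le_div_iff₀ (by positivity) (by linarith)]
        nlinarith
      have hsd_low2 : 2 * H * (2 * H - 1) * (1 / (m + 1)) ≤ sd (2 * H) m := by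
        calc 2 * H * (2 * H - 1) * (1 / (m + 1))
            = 2 * H * (2 * H - 1) * (m + 1) ^ ((-1:ℝ)) := by rw [hinv]
          _ ≤ 2 * H * (2 * H - 1) * (m + 1) ^ (2 * H - 2) :=
            mul_le_mul_of_nonneg_left hexp hK.le
          _ ≤ sd (2 * H) m := hlow_m
      have hsq : (0:ℝ) < (b - c) ^ 2 := by positivity
      calc C1 * (1 / (n:ℝ))
          = (b - c) ^ 2 / 2 * (2 * H * (2 * H - 1) *
              ((1 / (2 * (p:ℝ) + 3)) * (1 / (n:ℝ)))) := by rw [hC1def]; ring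
        _ ≤ (b - c) ^ 2 / 2 * (2 * H * (2 * H - 1) * (1 / (m + 1))) := by
            refine mul_le_mul_of_nonneg_left ?_ (by positivity)
            exact mul_le_mul_of_nonneg_left hfrac hK.le
        _ ≤ (b - c) ^ 2 / 2 * sd (2 * H) m :=
            mul_le_mul_of_nonneg_left hsd_low2 (by positivity)
        _ ≤ R p n := hstep1
    have hsum : ∀ N : ℕ, C1 * ∑ i ∈ Finset.range N, (1 / ((i:ℝ) + 1))
        ≤ ∑ n ∈ Finset.Icc 1 N, R p n := by
      intro N
      have h1 : C1 * ∑ i ∈ Finset.range N, (1 / ((i:ℝ) + 1))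
          = ∑ n ∈ Finset.Icc 1 N, C1 * (1 / (n:ℝ)) := by
        rw [Finset.mul_sum, ← Finset.Ico_add_one_right_eq_Icc, Finset.sum_Ico_eq_sum_range]
        norm_num
        refine Finset.sum_congr rfl fun i _ => ?_
        push_cast
        ring
      rw [h1]
      exact Finset.sum_le_sum fun n hn => hterm n (Finset.mem_Icc.mp hn).1
    exact tendsto_atTop_mono hsum
      (Real.tendsto_sum_range_one_div_nat_succ_atTop.const_mul_atTop hC1)
end

section
/- Let H ∈ (0, 1/2), a ≠ 0, b + c ≠ 0, (b,c) ≠ (0,0). Then the Markov triple-point identity C(√t, t²)·C(t,t) = C(√t, t)·C(t, t²) fails for all sufficiently large t, where C(t,s) = a²(t∧s) + ((b+c)²/2)(t^{2H}+s^{2H}) - bc(t+s)^{2H} - ((b²+c²)/2)|t-s|^{2H}. Hence the mixed generalized fractional Brownian motion M^H(a,b,c) is not a Markov process. -/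
open Filter Real

noncomputable def mgfQ (H b c r t : ℝ) : ℝ :=
  t ^ r * (b * c * ((1 + t ^ (-r)) ^ (2 * H) - 1)
    + (b ^ 2 + c ^ 2) / 2 * ((1 - t ^ (-r)) ^ (2 * H) - 1))

lemma mgf_slope (p B M : ℝ) :
    Tendsto (fun x : ℝ => (B * ((1 + x) ^ p - 1) + M * ((1 - x) ^ p - 1)) / x)
      (nhdsWithin 0 {(0 : ℝ)}ᶜ) (nhds (p * B - p * M)) := by
  have d1 : HasDerivAt (fun x : ℝ => (1 + x) ^ p) p 0 := by
    have h0 : HasDerivAt (fun x : ℝ => 1 + x) 1 0 := (hasDerivAt_id 0).const_add 1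
    have h1 := (Real.hasDerivAt_rpow_const (x := (1 : ℝ) + 0) (p := p)
      (Or.inl (by norm_num))).comp 0 h0
    simpa [Function.comp_def] using h1
  have d2 : HasDerivAt (fun x : ℝ => (1 - x) ^ p) (-p) 0 := by
    have h0 : HasDerivAt (fun x : ℝ => 1 - x) (-1) 0 := (hasDerivAt_id 0).const_sub 1
    have h1 := (Real.hasDerivAt_rpow_const (x := (1 : ℝ) - 0) (p := p)
      (Or.inl (by norm_num))).comp 0 h0
    simpa [Function.comp_def] using h1
  have hf : HasDerivAt (fun x : ℝ => B * (1 + x) ^ p + M * (1 - x) ^ p) (p * B - p * M) 0 := by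
    have h : HasDerivAt (fun x : ℝ => B * (1 + x) ^ p + M * (1 - x) ^ p) (B * p + M * -p) 0 :=
      (d1.const_mul B).add (d2.const_mul M)
    convert h using 1
    ring
  have hs := hasDerivAt_iff_tendsto_slope.mp hf
  refine hs.congr fun x => ?_
  rw [slope_def_field]
  simp only [sub_zero]
  congr 1
  simp only [add_zero, sub_zero, Real.one_rpow]
  ring

lemma mgf_tendsto_Q (H b c r : ℝ) (hr : 0 < r) :
    Tendsto (mgfQ H b c r) atTop
      (nhds (2 * H * (b * c) - 2 * H * ((b ^ 2 + c ^ 2) / 2))) := by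
  have h0 : Tendsto (fun t : ℝ => t ^ (-r)) atTop (nhdsWithin 0 {(0 : ℝ)}ᶜ) := by
    apply tendsto_nhdsWithin_of_tendsto_nhds_of_eventually_within
    · exact tendsto_rpow_neg_atTop hr
    · filter_upwards [Filter.eventually_gt_atTop (0 : ℝ)] with t ht
      exact (Real.rpow_pos_of_pos ht _).ne'
  have h := (mgf_slope (2 * H) (b * c) ((b ^ 2 + c ^ 2) / 2)).comp h0
  refine h.congr' ?_
  filter_upwards [Filter.eventually_gt_atTop (0 : ℝ)] with t ht
  show (b * c * ((1 + t ^ (-r)) ^ (2 * H) - 1)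
      + (b ^ 2 + c ^ 2) / 2 * ((1 - t ^ (-r)) ^ (2 * H) - 1)) / t ^ (-r) = mgfQ H b c r t
  rw [mgfQ, Real.rpow_neg ht.le, div_eq_mul_inv, inv_inv, mul_comm]

noncomputable def mgfG (H a b c t : ℝ) : ℝ :=
  a ^ 2 * ((b + c) ^ 2 / 2 - 2 ^ (2 * H) * (b * c))
    + a ^ 2 * mgfQ H b c (1 / 2) t
    + a ^ 2 * t ^ (2 * H - 1) * mgfQ H b c 1 t
    - a ^ 2 * t ^ (2 * H - 1) * mgfQ H b c (3 / 2) t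
    + (b + c) ^ 2 / 2 * ((b + c) ^ 2 / 2 - 2 ^ (2 * H) * (b * c)) * t ^ (H - 1 / 2)
    - (2 * ((b + c) ^ 2 / 2) - 2 ^ (2 * H) * (b * c)) * t ^ (4 * H - 2) * mgfQ H b c (3 / 2) t
    + (b + c) ^ 2 / 2 * t ^ (3 * H - 3 / 2) * mgfQ H b c 1 t
    + (b + c) ^ 2 / 2 * t ^ (2 * H - 1) * mgfQ H b c (1 / 2) t
    - t ^ (4 * H - 2) * mgfQ H b c (1 / 2) t * mgfQ H b c 1 t

noncomputable def mgfCov (H a b c x y : ℝ) : ℝ :=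
  a ^ 2 * min x y + (b + c) ^ 2 / 2 * (x ^ (2 * H) + y ^ (2 * H))
    - b * c * (x + y) ^ (2 * H) - (b ^ 2 + c ^ 2) / 2 * |x - y| ^ (2 * H)

lemma mgf_identity (H a b c t : ℝ) (hH0 : 0 < H) (ht2 : 2 ≤ t) :
    mgfCov H a b c (Real.sqrt t) (t ^ 2) * mgfCov H a b c t t
      - mgfCov H a b c (Real.sqrt t) t * mgfCov H a b c t (t ^ 2)
      = mgfG H a b c t * t ^ (2 * H + 1 / 2) := by
  have ht0 : (0 : ℝ) < t := by linarith
  have ht1 : (1 : ℝ) ≤ t := by linarith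
  have hp0 : (0 : ℝ) < 2 * H := by linarith
  -- basic power facts
  have hT2 : (t : ℝ) ^ (2 : ℕ) = t ^ (2 : ℝ) := by
    rw [← Real.rpow_natCast t 2]; norm_num
  have hXn : ∀ n : ℕ, t ^ ((n : ℝ) * H) = (t ^ H) ^ n := by
    intro n; rw [mul_comm, Real.rpow_mul ht0.le, Real.rpow_natCast]
  have hg3 : t ^ (2 * H) = (t ^ H) ^ (2 : ℕ) := by
    rw [← hXn 2]; norm_num
  have hg1 : (t ^ (1 / 2 : ℝ)) ^ (2 * H) = t ^ H := by
    rw [← Real.rpow_mul ht0.le]; congr 1; ring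
  have hpw2 : (t ^ (2 : ℝ)) ^ (2 * H) = (t ^ H) ^ (4 : ℕ) := by
    rw [← Real.rpow_mul ht0.le, show (2 : ℝ) * (2 * H) = (4 : ℝ) * H by ring, ← hXn 4]
    norm_num
  -- order facts
  have hst : t ^ (1 / 2 : ℝ) ≤ t := by
    calc t ^ (1 / 2 : ℝ) ≤ t ^ (1 : ℝ) :=
          Real.rpow_le_rpow_of_exponent_le ht1 (by norm_num)
    _ = t := Real.rpow_one t
  have htt : t ≤ t ^ (2 : ℕ) := by nlinarith
  have hle1 : t ^ (1 / 2 : ℝ) ≤ t ^ (2 : ℕ) := hst.trans htt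
  -- nonnegativity of binomial factors
  have hnn : ∀ r : ℝ, 0 ≤ 1 + t ^ (-r) := by
    intro r; have := Real.rpow_pos_of_pos ht0 (-r); linarith
  have hnn' : ∀ r : ℝ, 0 < r → 0 ≤ 1 - t ^ (-r) := by
    intro r hr
    have := Real.rpow_le_one_of_one_le_of_nonpos ht1 (by linarith : -r ≤ 0)
    linarith
  -- sum/difference decompositions
  have hsum1 : t ^ (1 / 2 : ℝ) + t ^ (2 : ℝ) = t ^ (2 : ℝ) * (1 + t ^ (-(3 / 2 : ℝ))) := by
    rw [mul_add, mul_one, ← Real.rpow_add ht0,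
      show (2 : ℝ) + -(3 / 2) = 1 / 2 by norm_num]; ring
  have hsub1 : t ^ (2 : ℝ) - t ^ (1 / 2 : ℝ) = t ^ (2 : ℝ) * (1 - t ^ (-(3 / 2 : ℝ))) := by
    rw [mul_sub, mul_one, ← Real.rpow_add ht0,
      show (2 : ℝ) + -(3 / 2) = 1 / 2 by norm_num]
  have hhalf : t * t ^ (-(1 / 2 : ℝ)) = t ^ (1 / 2 : ℝ) := by
    nth_rewrite 1 [← Real.rpow_one t]
    rw [← Real.rpow_add ht0]; norm_num
  have hsum2 : t ^ (1 / 2 : ℝ) + t = t * (1 + t ^ (-(1 / 2 : ℝ))) := by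
    rw [mul_add, mul_one, hhalf]; ring
  have hsub2 : t - t ^ (1 / 2 : ℝ) = t * (1 - t ^ (-(1 / 2 : ℝ))) := by
    rw [mul_sub, mul_one, hhalf]
  have hsum3 : t + t ^ (2 : ℝ) = t ^ (2 : ℝ) * (1 + t ^ (-(1 : ℝ))) := by
    rw [mul_add, mul_one, ← Real.rpow_add ht0, show (2 : ℝ) + -1 = 1 by norm_num,
      Real.rpow_one]; ring
  have hsub3 : t ^ (2 : ℝ) - t = t ^ (2 : ℝ) * (1 - t ^ (-(1 : ℝ))) := by
    rw [mul_sub, mul_one, ← Real.rpow_add ht0, show (2 : ℝ) + -1 = 1 by norm_num,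
      Real.rpow_one]
  have hsum4 : t + t = 2 * t := by ring
  -- composite rpow rewrites
  have e5 : (t ^ (1 / 2 : ℝ) + t ^ (2 : ℝ)) ^ (2 * H)
      = (t ^ H) ^ (4 : ℕ) * (1 + t ^ (-(3 / 2 : ℝ))) ^ (2 * H) := by
    rw [hsum1, Real.mul_rpow (by positivity) (hnn _), hpw2]
  have e6 : (t ^ (2 : ℝ) - t ^ (1 / 2 : ℝ)) ^ (2 * H)
      = (t ^ H) ^ (4 : ℕ) * (1 - t ^ (-(3 / 2 : ℝ))) ^ (2 * H) := by
    rw [hsub1, Real.mul_rpow (by positivity) (hnn' _ (by norm_num)), hpw2]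
  have e1 : (t ^ (1 / 2 : ℝ) + t) ^ (2 * H)
      = (t ^ H) ^ (2 : ℕ) * (1 + t ^ (-(1 / 2 : ℝ))) ^ (2 * H) := by
    rw [hsum2, Real.mul_rpow ht0.le (hnn _), ← hg3]
  have e2 : (t - t ^ (1 / 2 : ℝ)) ^ (2 * H)
      = (t ^ H) ^ (2 : ℕ) * (1 - t ^ (-(1 / 2 : ℝ))) ^ (2 * H) := by
    rw [hsub2, Real.mul_rpow ht0.le (hnn' _ (by norm_num)), ← hg3]
  have e3 : (t + t ^ (2 : ℝ)) ^ (2 * H)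
      = (t ^ H) ^ (4 : ℕ) * (1 + t ^ (-(1 : ℝ))) ^ (2 * H) := by
    rw [hsum3, Real.mul_rpow (by positivity) (hnn _), hpw2]
  have e4 : (t ^ (2 : ℝ) - t) ^ (2 * H)
      = (t ^ H) ^ (4 : ℕ) * (1 - t ^ (-(1 : ℝ))) ^ (2 * H) := by
    rw [hsub3, Real.mul_rpow (by positivity) (hnn' _ (by norm_num)), hpw2]
  have e0 : (t + t) ^ (2 * H) = 2 ^ (2 * H) * (t ^ H) ^ (2 : ℕ) := by
    rw [hsum4, Real.mul_rpow (by norm_num) ht0.le, ← hg3]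
  -- abs rewrites
  have habs1 : |t ^ (1 / 2 : ℝ) - t ^ (2 : ℕ)| = t ^ (2 : ℕ) - t ^ (1 / 2 : ℝ) := by
    rw [abs_sub_comm, abs_of_nonneg (sub_nonneg.mpr hle1)]
  have habs2 : |t ^ (1 / 2 : ℝ) - t| = t - t ^ (1 / 2 : ℝ) := by
    rw [abs_sub_comm, abs_of_nonneg (sub_nonneg.mpr hst)]
  have habs3 : |t - t ^ (2 : ℕ)| = t ^ (2 : ℕ) - t := by
    rw [abs_sub_comm, abs_of_nonneg (sub_nonneg.mpr htt)]
  -- RHS power conversions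
  have hr1 : t ^ (2 * H + 1 / 2) = (t ^ H) ^ (2 : ℕ) * t ^ (1 / 2 : ℝ) := by
    rw [Real.rpow_add ht0, hg3]
  have hr2 : t ^ (2 * H - 1) = (t ^ H) ^ (2 : ℕ) / t := by
    rw [Real.rpow_sub ht0, Real.rpow_one, hg3]
  have hr3 : t ^ (H - 1 / 2) = t ^ H / t ^ (1 / 2 : ℝ) := Real.rpow_sub ht0 _ _
  have hr7 : t ^ (3 / 2 : ℝ) = t * t ^ (1 / 2 : ℝ) := by
    rw [show (3 / 2 : ℝ) = 1 + 1 / 2 by norm_num, Real.rpow_add ht0, Real.rpow_one]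
  have hr4 : t ^ (3 * H - 3 / 2) = (t ^ H) ^ (3 : ℕ) / (t * t ^ (1 / 2 : ℝ)) := by
    rw [Real.rpow_sub ht0, hr7, show (3 : ℝ) * H = ((3 : ℕ) : ℝ) * H by norm_num, hXn 3]
  have hr5 : t ^ (4 * H - 2) = (t ^ H) ^ (4 : ℕ) / (t * t) := by
    rw [Real.rpow_sub ht0, show (4 : ℝ) * H = ((4 : ℕ) : ℝ) * H by norm_num, hXn 4, hT2.symm]
    ring_nf
  have hr6 : t ^ (1 : ℝ) = t := Real.rpow_one t
  -- expand
  rw [mgfCov, mgfCov, mgfCov, mgfCov, mgfG, mgfQ, mgfQ, mgfQ]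
  rw [Real.sqrt_eq_rpow]
  rw [min_eq_left hle1, min_self, min_eq_left hst, min_eq_left htt]
  rw [sub_self, abs_zero, Real.zero_rpow hp0.ne']
  rw [habs1, habs2, habs3]
  rw [hT2]
  rw [e5, e6, e1, e2, e3, e4, e0, hg1, hpw2, hg3]
  rw [hr1, hr2, hr3, hr4, hr5, hr6, hr7]
  -- hide the half-power and eliminate bare t
  set S := t ^ (1 / 2 : ℝ) with hS
  have hS0 : S ≠ 0 := by rw [hS]; exact (Real.rpow_pos_of_pos ht0 _).ne'
  have htS : t = S * S := by
    rw [hS, ← Real.rpow_add ht0]; norm_num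
  rw [htS]
  field_simp
  ring

lemma mgf_tendsto_G (H a b c : ℝ) (hH2 : H < 1 / 2) :
    Tendsto (mgfG H a b c) atTop
      (nhds (a ^ 2 * ((b + c) ^ 2 / 2 - 2 ^ (2 * H) * (b * c) - H * (b - c) ^ 2))) := by
  have hQh := mgf_tendsto_Q H b c (1 / 2) (by norm_num)
  have hQ1 := mgf_tendsto_Q H b c 1 (by norm_num)
  have hQ3 := mgf_tendsto_Q H b c (3 / 2) (by norm_num)
  have hz : ∀ y : ℝ, y < 0 → Tendsto (fun t : ℝ => t ^ y) atTop (nhds 0) := by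
    intro y hy
    have := tendsto_rpow_neg_atTop (y := -y) (by linarith)
    simpa using this
  have h1 : Tendsto (fun t : ℝ => t ^ (2 * H - 1)) atTop (nhds 0) := hz _ (by linarith)
  have h2 : Tendsto (fun t : ℝ => t ^ (H - 1 / 2)) atTop (nhds 0) := hz _ (by linarith)
  have h3 : Tendsto (fun t : ℝ => t ^ (3 * H - 3 / 2)) atTop (nhds 0) := hz _ (by linarith)
  have h4 : Tendsto (fun t : ℝ => t ^ (4 * H - 2)) atTop (nhds 0) := hz _ (by linarith)
  have hcomb := ((((((((tendsto_const_nhds (x := a ^ 2 * ((b + c) ^ 2 / 2 - 2 ^ (2 * H) * (b * c)))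
      (f := atTop)).add (hQh.const_mul (a ^ 2))).add
      ((h1.const_mul (a ^ 2)).mul hQ1)).sub
      ((h1.const_mul (a ^ 2)).mul hQ3)).add
      (h2.const_mul ((b + c) ^ 2 / 2 * ((b + c) ^ 2 / 2 - 2 ^ (2 * H) * (b * c))))).sub
      ((h4.const_mul (2 * ((b + c) ^ 2 / 2) - 2 ^ (2 * H) * (b * c))).mul hQ3)).add
      ((h3.const_mul ((b + c) ^ 2 / 2)).mul hQ1)).add
      ((h1.const_mul ((b + c) ^ 2 / 2)).mul hQh)).sub
      ((h4.mul hQh).mul hQ1)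
  have hval : a ^ 2 * ((b + c) ^ 2 / 2 - 2 ^ (2 * H) * (b * c))
      + a ^ 2 * (2 * H * (b * c) - 2 * H * ((b ^ 2 + c ^ 2) / 2))
      + a ^ 2 * 0 * (2 * H * (b * c) - 2 * H * ((b ^ 2 + c ^ 2) / 2))
      - a ^ 2 * 0 * (2 * H * (b * c) - 2 * H * ((b ^ 2 + c ^ 2) / 2))
      + (b + c) ^ 2 / 2 * ((b + c) ^ 2 / 2 - 2 ^ (2 * H) * (b * c)) * 0
      - (2 * ((b + c) ^ 2 / 2) - 2 ^ (2 * H) * (b * c)) * 0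
        * (2 * H * (b * c) - 2 * H * ((b ^ 2 + c ^ 2) / 2))
      + (b + c) ^ 2 / 2 * 0 * (2 * H * (b * c) - 2 * H * ((b ^ 2 + c ^ 2) / 2))
      + (b + c) ^ 2 / 2 * 0 * (2 * H * (b * c) - 2 * H * ((b ^ 2 + c ^ 2) / 2))
      - 0 * (2 * H * (b * c) - 2 * H * ((b ^ 2 + c ^ 2) / 2))
        * (2 * H * (b * c) - 2 * H * ((b ^ 2 + c ^ 2) / 2))
      = a ^ 2 * ((b + c) ^ 2 / 2 - 2 ^ (2 * H) * (b * c) - H * (b - c) ^ 2) := by ring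
  rw [← hval]
  exact hcomb


/-- Failure of the Markov triple-point identity for the mgfBm (`H < 1/2`, `a ≠ 0`,
`b + c ≠ 0`): the mgfBm is not Markovian. -/
theorem mgfBm_not_markov (H a b c : ℝ) (hH : H ∈ Set.Ioo (0 : ℝ) (1 / 2))
    (ha : a ≠ 0) (hbc : b + c ≠ 0) (hbc' : (b, c) ≠ (0, 0))
    (C : ℝ → ℝ → ℝ)
    (hC : ∀ t s : ℝ,
      C t s = a ^ 2 * min t s + (b + c) ^ 2 / 2 * (t ^ (2 * H) + s ^ (2 * H))
        - b * c * (t + s) ^ (2 * H) - (b ^ 2 + c ^ 2) / 2 * |t - s| ^ (2 * H)) :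
    ∃ T : ℝ, ∀ t : ℝ, T ≤ t →
      C (Real.sqrt t) (t ^ 2) * C t t ≠ C (Real.sqrt t) t * C t (t ^ 2) := by
  obtain ⟨hH0, hH2⟩ := hH
  -- positivity of the limit
  have ha2 : (0 : ℝ) < a ^ 2 := by positivity
  have hbc2 : (0 : ℝ) < (b + c) ^ 2 := by positivity
  have he2 : (2 : ℝ) ^ (2 * H) < 2 := by
    calc (2 : ℝ) ^ (2 * H) < 2 ^ (1 : ℝ) :=
          Real.rpow_lt_rpow_of_exponent_lt (by norm_num) (by linarith)
    _ = 2 := Real.rpow_one 2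
  have he4 : 4 * H < (2 : ℝ) ^ (2 * H) := by
    have hlog1 : Real.log 2 < 1 := by
      have := Real.log_two_lt_d9; linarith
    have hlogpos : 0 < Real.log 2 := Real.log_pos (by norm_num)
    have hx : (2 * H - 1) * Real.log 2 ≠ 0 :=
      mul_ne_zero (by intro h; nlinarith) hlogpos.ne'
    have hexp := Real.add_one_lt_exp hx
    have heval : (2 : ℝ) ^ (2 * H) = 2 * Real.exp ((2 * H - 1) * Real.log 2) := by
      rw [Real.rpow_def_of_pos (by norm_num : (0 : ℝ) < 2),
        show Real.log 2 * (2 * H) = Real.log 2 + (2 * H - 1) * Real.log 2 by ring,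
        Real.exp_add, Real.exp_log (by norm_num : (0 : ℝ) < 2)]
    have hprod : 0 < (2 * H - 1) * (Real.log 2 - 1) :=
      mul_pos_of_neg_of_neg (by linarith) (by linarith)
    nlinarith [hexp, hprod, heval]
  have hL : 0 < a ^ 2 * ((b + c) ^ 2 / 2 - 2 ^ (2 * H) * (b * c) - H * (b - c) ^ 2) := by
    have h1 : 0 < (2 - (2 : ℝ) ^ (2 * H)) * (b + c) ^ 2 := mul_pos (by linarith) hbc2
    have h2 : 0 ≤ ((2 : ℝ) ^ (2 * H) - 4 * H) * (b - c) ^ 2 :=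
      mul_nonneg (by linarith) (sq_nonneg _)
    have hK : 0 < (b + c) ^ 2 / 2 - 2 ^ (2 * H) * (b * c) - H * (b - c) ^ 2 := by nlinarith
    exact mul_pos ha2 hK
  -- the normalized difference eventually equals mgfG
  have key : (fun t : ℝ => (C (Real.sqrt t) (t ^ 2) * C t t
        - C (Real.sqrt t) t * C t (t ^ 2)) / t ^ (2 * H + 1 / 2))
      =ᶠ[Filter.atTop] mgfG H a b c := by
    filter_upwards [Filter.eventually_ge_atTop (2 : ℝ)] with t ht2
    have ht0 : (0 : ℝ) < t := by linarith
    have hd : t ^ (2 * H + 1 / 2) ≠ 0 := (Real.rpow_pos_of_pos ht0 _).ne'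
    rw [div_eq_iff hd, hC (Real.sqrt t) (t ^ 2), hC t t, hC (Real.sqrt t) t, hC t (t ^ 2)]
    exact mgf_identity H a b c t hH0 ht2
  have hT := (mgf_tendsto_G H a b c hH2).congr' key.symm
  have hpos := hT.eventually (eventually_gt_nhds hL)
  refine Filter.eventually_atTop.mp (hpos.mono fun t h hEq => ?_)
  rw [hEq, sub_self, zero_div] at h
  exact lt_irrefl 0 h
end

section
/- Let H ∈ (1/2, 1), a,b,c ∈ ℝ with (b,c) ≠ (0,0), and suppose bc ≥ 0 (so that γ = b² + c² - 2bc(2^{2H-1}-1) > 0). Then for all 0 ≤ s < t, E[(M^H_t(a,b,c) - M^H_s(a,b,c))²] ≥ γ (t-s)^{2H}, where the left-hand side equals a²(t-s) - 2^{2H}bc(t^{2H}+s^{2H}) + (b²+c²)(t-s)^{2H} + 2bc(t+s)^{2H}. In particular the increment variance is bounded below and above by constant multiples of (t-s)^{2H}. -/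
open Real Set

/-- Key convexity-type inequality: for `1 < α < 2` and `0 ≤ u`, `0 ≤ s`,
`2 ^ (α - 1) * ((u + s) ^ α + s ^ α) ≤ (u + 2 * s) ^ α + (2 ^ (α - 1) - 1) * u ^ α`. -/
lemma mgfBm_key (α u s : ℝ) (hα1 : 1 < α) (hα2 : α < 2) (hu : 0 ≤ u) (hs : 0 ≤ s) :
    2 ^ (α - 1) * ((u + s) ^ α + s ^ α) ≤ (u + 2 * s) ^ α + (2 ^ (α - 1) - 1) * u ^ α := by
  set β := α - 1 with hβ
  have hβ0 : 0 < β := by simp [hβ]; linarith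
  have hβ1 : β < 1 := by simp [hβ]; linarith
  set g : ℝ → ℝ := fun v => (u + 2 * v) ^ α - 2 ^ β * ((u + v) ^ α + v ^ α) with hg
  have hderiv : ∀ v : ℝ, HasDerivAt g
      (α * (u + 2 * v) ^ β * 2 - 2 ^ β * (α * (u + v) ^ β * 1 + α * v ^ β)) v := by
    intro v
    have hA : HasDerivAt (fun v : ℝ => (u + 2 * v) ^ α) (α * (u + 2 * v) ^ β * 2) v := by
      have inner : HasDerivAt (fun v : ℝ => u + 2 * v) 2 v := by
        simpa using ((hasDerivAt_id v).const_mul (2 : ℝ)).const_add u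
      exact (Real.hasDerivAt_rpow_const (Or.inr hα1.le)).comp v inner
    have hB : HasDerivAt (fun v : ℝ => (u + v) ^ α) (α * (u + v) ^ β * 1) v := by
      have inner : HasDerivAt (fun v : ℝ => u + v) 1 v := by
        simpa using (hasDerivAt_id v).const_add u
      exact (Real.hasDerivAt_rpow_const (Or.inr hα1.le)).comp v inner
    have hC : HasDerivAt (fun v : ℝ => v ^ α) (α * v ^ β) v :=
      Real.hasDerivAt_rpow_const (Or.inr hα1.le)
    exact hA.sub ((hB.add hC).const_mul ((2 : ℝ) ^ β))
  have hmono : MonotoneOn g (Ici (0 : ℝ)) := by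
    refine monotoneOn_of_deriv_nonneg (convex_Ici 0)
      (fun v _ => (hderiv v).continuousAt.continuousWithinAt)
      (fun v _ => (hderiv v).differentiableAt.differentiableWithinAt) ?_
    intro v hv
    rw [interior_Ici] at hv
    rw [(hderiv v).deriv]
    have hv0 : (0 : ℝ) < v := hv
    -- concavity of x ^ β
    have hcon := (Real.strictConcaveOn_rpow hβ0 hβ1).concaveOn
    have h2 := hcon.2 (show u + v ∈ Ici (0 : ℝ) by simp; linarith)
      (show v ∈ Ici (0 : ℝ) by simp [hv0.le])
      (by norm_num : (0:ℝ) ≤ 1/2) (by norm_num : (0:ℝ) ≤ 1/2) (by norm_num)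
    simp only [smul_eq_mul] at h2
    have hmid : (1/2 : ℝ) * (u + v) + (1/2 : ℝ) * v = (u + 2 * v) / 2 := by ring
    rw [hmid] at h2
    have hdiv : ((u + 2 * v) / 2) ^ β = (u + 2 * v) ^ β / 2 ^ β :=
      Real.div_rpow (show (0:ℝ) ≤ u + 2 * v by linarith) (show (0:ℝ) ≤ 2 by norm_num) β
    rw [hdiv] at h2
    have h2β : (0 : ℝ) < 2 ^ β := Real.rpow_pos_of_pos (by norm_num) β
    have hα0 : (0 : ℝ) < α := by linarith
    -- h2 : 1/2 * (u+v)^β + 1/2 * v^β ≤ (u+2v)^β / 2^β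
    have key : 2 ^ β * ((u + v) ^ β + v ^ β) ≤ 2 * (u + 2 * v) ^ β := by
      have := mul_le_mul_of_nonneg_left h2 (le_of_lt (by positivity : (0:ℝ) < 2 * 2 ^ β))
      calc 2 ^ β * ((u + v) ^ β + v ^ β)
          = 2 * 2 ^ β * (1/2 * (u + v) ^ β + 1/2 * v ^ β) := by ring
        _ ≤ 2 * 2 ^ β * ((u + 2 * v) ^ β / 2 ^ β) := this
        _ = 2 * (u + 2 * v) ^ β := by field_simp
    nlinarith [mul_le_mul_of_nonneg_left key hα0.le]
  have h0 : g 0 ≤ g s := hmono (by simp) (by simp [hs]) hs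
  have hz : g 0 = u ^ α - 2 ^ β * u ^ α := by
    simp [hg, Real.zero_rpow (by linarith : α ≠ 0)]
  rw [hz] at h0
  simp only [hg] at h0
  linarith

/-- Lower bound on the increment variance of the mgfBm for `H > 1/2`, `bc ≥ 0`. -/
theorem mgfBm_increment_lower_bound (H a b c : ℝ) (hH : H ∈ Set.Ioo (1 / 2 : ℝ) 1)
    (hbc : (b, c) ≠ (0, 0)) (hbc' : 0 ≤ b * c) :
    0 < b ^ 2 + c ^ 2 - 2 * b * c * (2 ^ (2 * H - 1) - 1) ∧
    ∀ s t : ℝ, 0 ≤ s → s < t →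
      (b ^ 2 + c ^ 2 - 2 * b * c * (2 ^ (2 * H - 1) - 1)) * (t - s) ^ (2 * H)
        ≤ a ^ 2 * (t - s) - 2 ^ (2 * H) * b * c * (t ^ (2 * H) + s ^ (2 * H))
            + (b ^ 2 + c ^ 2) * (t - s) ^ (2 * H) + 2 * b * c * (t + s) ^ (2 * H) := by
  obtain ⟨hH1, hH2⟩ := hH
  have hα1 : 1 < 2 * H := by linarith
  have hα2 : 2 * H < 2 := by linarith
  have hθpos : (0 : ℝ) < 2 ^ (2 * H - 1) - 1 := by
    have : (1 : ℝ) < 2 ^ (2 * H - 1) :=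
      Real.one_lt_rpow_iff_of_pos (by norm_num) |>.2 (Or.inl ⟨by norm_num, by linarith⟩)
    linarith
  have hθlt : (2 : ℝ) ^ (2 * H - 1) - 1 < 1 := by
    have h := Real.rpow_lt_rpow_of_exponent_lt (x := 2) (by norm_num)
      (show 2 * H - 1 < 1 by linarith)
    rw [Real.rpow_one] at h
    linarith
  have hne : b ≠ 0 ∨ c ≠ 0 := by
    by_contra h
    push_neg at h
    exact hbc (by simp [h.1, h.2])
  constructor
  · rcases eq_or_lt_of_le hbc' with h | h
    · have hbc0 : b * c = 0 := h.symm
      have : 0 < b ^ 2 + c ^ 2 := by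
        rcases hne with hb | hc
        · positivity
        · positivity
      nlinarith
    · nlinarith [sq_nonneg (b - c)]
  · intro s t hs hst
    have hkey := mgfBm_key (2 * H) (t - s) s hα1 hα2 (by linarith) hs
    have e1 : t - s + s = t := by ring
    have e2 : t - s + 2 * s = t + s := by ring
    rw [e1, e2] at hkey
    have h2α : (2 : ℝ) ^ (2 * H) = 2 * 2 ^ (2 * H - 1) := by
      have h := Real.rpow_add (show (0:ℝ) < 2 by norm_num) 1 (2 * H - 1)
      rw [Real.rpow_one, show (1:ℝ) + (2 * H - 1) = 2 * H by ring] at h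
      exact h
    rw [h2α]
    nlinarith [mul_le_mul_of_nonneg_left hkey hbc',
      mul_nonneg (sq_nonneg a) (by linarith : (0:ℝ) ≤ t - s)]
end

section
/- For any H ∈ (0,1), the function (t,s) ↦ a²(t∧s) + ((b+c)²/2)(t^{2H}+s^{2H}) - bc(t+s)^{2H} - ((b²+c²)/2)|t-s|^{2H} on [0,∞)² is symmetric and positive semidefinite (i.e., for all n, all t₁,…,tₙ ≥ 0 and real λ₁,…,λₙ, Σ_{i,j} λᵢλⱼ C(tᵢ,tⱼ) ≥ 0). -/
open MeasureTheory Real Set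

namespace MgfBmAux

/-- The basic kernel `(1 - cos (x*u)) * u^(-1-α)`. -/
noncomputable def kern (α x u : ℝ) : ℝ := (1 - Real.cos (x * u)) * u ^ (-1 - α)

lemma kern_contOn (α x : ℝ) : ContinuousOn (kern α x) (Ioi 0) := by
  unfold kern
  apply ContinuousOn.mul
  · exact (continuous_const.sub (Real.continuous_cos.comp (continuous_const.mul
      continuous_id))).continuousOn
  · exact continuousOn_id.rpow_const fun u hu => Or.inl (ne_of_gt hu)

lemma kern_nonneg (α x : ℝ) {u : ℝ} (hu : 0 ≤ u) : 0 ≤ kern α x u :=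
  mul_nonneg (by nlinarith [Real.cos_le_one (x * u)]) (Real.rpow_nonneg hu _)

lemma kern_integrable {α : ℝ} (hα : 0 < α) (hα2 : α < 2) (x : ℝ) :
    IntegrableOn (kern α x) (Ioi 0) := by
  have hmeas : ∀ s : Set ℝ, MeasurableSet s → s ⊆ Ioi 0 →
      AEStronglyMeasurable (kern α x) (volume.restrict s) :=
    fun s hs hsub => ((kern_contOn α x).mono hsub).aestronglyMeasurable hs
  have h1 : IntegrableOn (kern α x) (Ioc 0 1) := by
    have hg : IntegrableOn (fun u : ℝ => x ^ 2 / 2 * u ^ (1 - α)) (Ioc 0 1) := by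
      have := (intervalIntegral.intervalIntegrable_rpow' (r := 1 - α) (by linarith)
        (a := 0) (b := 1))
      rw [intervalIntegrable_iff_integrableOn_Ioc_of_le zero_le_one] at this
      exact this.const_mul _
    refine Integrable.mono' hg (hmeas _ measurableSet_Ioc (fun u hu => hu.1)) ?_
    rw [ae_restrict_iff' measurableSet_Ioc]
    filter_upwards with u hu
    have hu0 : 0 < u := hu.1
    have h1c : 1 - Real.cos (x * u) ≤ (x * u) ^ 2 / 2 := by
      nlinarith [Real.one_sub_sq_div_two_le_cos (x := x * u)]
    rw [Real.norm_eq_abs, abs_of_nonneg (kern_nonneg α x hu0.le)]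
    unfold kern
    have hupow : u ^ 2 * u ^ (-1 - α) = u ^ (1 - α) := by
      rw [← Real.rpow_natCast u 2, ← Real.rpow_add hu0]
      push_cast
      congr 1
      ring
    calc (1 - Real.cos (x * u)) * u ^ (-1 - α)
        ≤ (x * u) ^ 2 / 2 * u ^ (-1 - α) :=
          mul_le_mul_of_nonneg_right h1c (Real.rpow_nonneg hu0.le _)
      _ = x ^ 2 / 2 * (u ^ 2 * u ^ (-1 - α)) := by ring
      _ = x ^ 2 / 2 * u ^ (1 - α) := by rw [hupow]
  have h2 : IntegrableOn (kern α x) (Ioi 1) := by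
    have hg : IntegrableOn (fun u : ℝ => 2 * u ^ (-1 - α)) (Ioi 1) :=
      (integrableOn_Ioi_rpow_of_lt (by linarith) one_pos).const_mul 2
    refine Integrable.mono' hg (hmeas _ measurableSet_Ioi (fun u hu => mem_Ioi.2 (lt_trans one_pos hu))) ?_
    rw [ae_restrict_iff' measurableSet_Ioi]
    filter_upwards with u hu
    have hu0 : (0:ℝ) < u := lt_trans one_pos hu
    rw [Real.norm_eq_abs, abs_of_nonneg (kern_nonneg α x hu0.le)]
    unfold kern
    apply mul_le_mul_of_nonneg_right _ (Real.rpow_nonneg hu0.le _)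
    nlinarith [Real.neg_one_le_cos (x * u)]
  have : Ioc (0:ℝ) 1 ∪ Ioi 1 = Ioi 0 := Ioc_union_Ioi_eq_Ioi zero_le_one
  rw [← this]
  exact h1.union h2

/-- The normalizing constant. -/
noncomputable def Kc (α : ℝ) : ℝ := ∫ u in Ioi (0:ℝ), kern α 1 u

lemma Kc_pos {α : ℝ} (hα : 0 < α) (hα2 : α < 2) : 0 < Kc α := by
  have hInt : IntegrableOn (kern α 1) (Ioi 0) := kern_integrable hα hα2 1
  have hsub : Ioc (1:ℝ) 2 ⊆ Ioi 0 := fun u hu => lt_trans one_pos hu.1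
  have hInt2 : IntegrableOn (kern α 1) (Ioc 1 2) := hInt.mono_set hsub
  have hlow : (1 - Real.cos 1) * (2:ℝ) ^ (-1 - α) ≤ ∫ u in Ioc (1:ℝ) 2, kern α 1 u := by
    have hc : IntegrableOn (fun _ : ℝ => (1 - Real.cos 1) * (2:ℝ) ^ (-1 - α)) (Ioc 1 2) :=
      integrableOn_const (by simp [Real.volume_Ioc])
    have hle : ∀ u ∈ Ioc (1:ℝ) 2, (1 - Real.cos 1) * (2:ℝ) ^ (-1 - α) ≤ kern α 1 u := by
      intro u hu
      unfold kern
      rw [one_mul]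
      have h2pi : (2:ℝ) ≤ π := Real.two_le_pi
      have hcos : Real.cos u ≤ Real.cos 1 :=
        Real.cos_le_cos_of_nonneg_of_le_pi zero_le_one (by linarith [hu.2]) hu.1.le
      have hr : (2:ℝ) ^ (-1 - α) ≤ u ^ (-1 - α) :=
        Real.rpow_le_rpow_of_nonpos (lt_trans one_pos hu.1) hu.2 (by linarith)
      calc (1 - Real.cos 1) * (2:ℝ) ^ (-1 - α)
          ≤ (1 - Real.cos u) * (2:ℝ) ^ (-1 - α) :=
            mul_le_mul_of_nonneg_right (by linarith) (Real.rpow_nonneg (by norm_num) _)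
        _ ≤ (1 - Real.cos u) * u ^ (-1 - α) :=
            mul_le_mul_of_nonneg_left hr (by nlinarith [Real.cos_le_one u])
    calc (1 - Real.cos 1) * (2:ℝ) ^ (-1 - α)
        = ∫ _ in Ioc (1:ℝ) 2, (1 - Real.cos 1) * (2:ℝ) ^ (-1 - α) := by
          rw [setIntegral_const]; simp [Real.volume_Ioc]; norm_num
      _ ≤ ∫ u in Ioc (1:ℝ) 2, kern α 1 u :=
          setIntegral_mono_on hc hInt2 measurableSet_Ioc hle
  have hmono : ∫ u in Ioc (1:ℝ) 2, kern α 1 u ≤ Kc α := by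
    apply setIntegral_mono_set hInt
    · exact (ae_restrict_iff' measurableSet_Ioi).2
        (Filter.Eventually.of_forall fun u hu => kern_nonneg α 1 (le_of_lt hu))
    · exact HasSubset.Subset.eventuallyLE hsub
  have hpos : 0 < (1 - Real.cos 1) * (2:ℝ) ^ (-1 - α) := by
    have h1 : Real.cos 1 < 1 := by nlinarith [Real.cos_one_le]
    have h2 : (0:ℝ) < (2:ℝ) ^ (-1 - α) := Real.rpow_pos_of_pos two_pos _
    nlinarith
  linarith

lemma kern_abs (α x : ℝ) : kern α x = kern α |x| := by
  funext u
  unfold kern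
  rcases abs_choice x with h | h
  · rw [h]
  · rw [h]; congr 2; rw [neg_mul, Real.cos_neg]

/-- Scaling identity: `∫ (1-cos(xu)) u^{-1-α} = |x|^α * Kc α`. -/
lemma kern_integral {α : ℝ} (hα : 0 < α) (hα2 : α < 2) (x : ℝ) :
    ∫ u in Ioi (0:ℝ), kern α x u = |x| ^ α * Kc α := by
  rcases eq_or_ne x 0 with rfl | hx
  · simp [kern, Real.zero_rpow hα.ne']
  · have hp : 0 < |x| := abs_pos.2 hx
    rw [kern_abs]
    set p := |x| with hpdef
    have step1 : ∀ u ∈ Ioi (0:ℝ), kern α p u = p ^ (1 + α) * kern α 1 (p * u) := by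
      intro u hu
      have hu0 : (0:ℝ) < u := hu
      unfold kern
      rw [one_mul]
      have : (p * u) ^ (-1 - α) = p ^ (-1 - α) * u ^ (-1 - α) :=
        Real.mul_rpow hp.le hu0.le
      rw [this]
      have hpp : p ^ (1 + α) * p ^ (-1 - α) = 1 := by
        rw [← Real.rpow_add hp]; ring_nf; exact Real.rpow_zero p
      calc (1 - Real.cos (p * u)) * u ^ (-1 - α)
          = (p ^ (1 + α) * p ^ (-1 - α)) * ((1 - Real.cos (p * u)) * u ^ (-1 - α)) := by
            rw [hpp, one_mul]
        _ = p ^ (1 + α) * ((1 - Real.cos (p * u)) * (p ^ (-1 - α) * u ^ (-1 - α))) := by ring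
    rw [setIntegral_congr_fun measurableSet_Ioi step1]
    rw [MeasureTheory.integral_const_mul]
    rw [MeasureTheory.integral_comp_mul_left_Ioi (kern α 1) 0 hp]
    rw [mul_zero]
    rw [smul_eq_mul, ← mul_assoc]
    congr 1
    rw [← Real.rpow_neg_one p, ← Real.rpow_add hp]
    congr 1
    ring


/-- Per-pair integrand. -/
noncomputable def psi (α b c : ℝ) {n : ℕ} (t lam : Fin n → ℝ) (i j : Fin n) (u : ℝ) : ℝ :=
  lam i * lam j *
    ((b + c) ^ 2 / 2 * (kern α (t i) u + kern α (t j) u) - b * c * kern α (t i + t j) u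
      - (b ^ 2 + c ^ 2) / 2 * kern α (t i - t j) u)

lemma psi_integrable {α : ℝ} (hα : 0 < α) (hα2 : α < 2) (b c : ℝ) {n : ℕ}
    (t lam : Fin n → ℝ) (i j : Fin n) : IntegrableOn (psi α b c t lam i j) (Ioi 0) := by
  unfold psi
  have hint := kern_integrable (α := α) hα hα2
  exact (((((hint (t i)).add (hint (t j))).const_mul _).sub
    ((hint (t i + t j)).const_mul _)).sub ((hint (t i - t j)).const_mul _)).const_mul _

lemma psi_integral {α : ℝ} (hα : 0 < α) (hα2 : α < 2) (b c : ℝ) {n : ℕ}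
    (t lam : Fin n → ℝ) (ht : ∀ i, 0 ≤ t i) (i j : Fin n) :
    ∫ u in Ioi (0:ℝ), psi α b c t lam i j u =
      Kc α * (lam i * lam j *
        ((b + c) ^ 2 / 2 * (t i ^ α + t j ^ α) - b * c * (t i + t j) ^ α
          - (b ^ 2 + c ^ 2) / 2 * |t i - t j| ^ α)) := by
  unfold psi
  have hint := kern_integrable (α := α) hα hα2
  have hI2 : Integrable (fun u : ℝ => (b + c) ^ 2 / 2 * (kern α (t i) u + kern α (t j) u))
      (volume.restrict (Ioi 0)) := by
    exact ((hint (t i)).add (hint (t j))).const_mul _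
  have hI3 : Integrable (fun u : ℝ => b * c * kern α (t i + t j) u)
      (volume.restrict (Ioi 0)) := (hint _).const_mul _
  have hI4 : Integrable (fun u : ℝ => (b ^ 2 + c ^ 2) / 2 * kern α (t i - t j) u)
      (volume.restrict (Ioi 0)) := (hint _).const_mul _
  have hI1 : Integrable (fun u : ℝ => (b + c) ^ 2 / 2 * (kern α (t i) u + kern α (t j) u)
      - b * c * kern α (t i + t j) u) (volume.restrict (Ioi 0)) := hI2.sub hI3
  rw [MeasureTheory.integral_const_mul, MeasureTheory.integral_sub hI1 hI4,
    MeasureTheory.integral_sub hI2 hI3,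
    MeasureTheory.integral_const_mul, MeasureTheory.integral_const_mul,
    MeasureTheory.integral_const_mul,
    MeasureTheory.integral_add (hint (t i)) (hint (t j)),
    kern_integral hα hα2, kern_integral hα hα2, kern_integral hα hα2, kern_integral hα hα2,
    abs_of_nonneg (ht i), abs_of_nonneg (ht j),
    abs_of_nonneg (add_nonneg (ht i) (ht j))]
  ring

lemma psi_pointwise (α b c : ℝ) {n : ℕ} (t lam : Fin n → ℝ) (u : ℝ) :
    ∑ i, ∑ j, psi α b c t lam i j u =
      ((b + c) ^ 2 / 2 * (∑ i, lam i * (1 - Real.cos (t i * u))) ^ 2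
        + (b - c) ^ 2 / 2 * (∑ i, lam i * Real.sin (t i * u)) ^ 2) * u ^ (-1 - α) := by
  have per : ∀ i j, psi α b c t lam i j u =
      ((b + c) ^ 2 / 2 *
          ((lam i * (1 - Real.cos (t i * u))) * (lam j * (1 - Real.cos (t j * u))))
        + (b - c) ^ 2 / 2 *
          ((lam i * Real.sin (t i * u)) * (lam j * Real.sin (t j * u)))) * u ^ (-1 - α) := by
    intro i j
    unfold psi kern
    rw [show (t i + t j) * u = t i * u + t j * u from add_mul _ _ _,
      show (t i - t j) * u = t i * u - t j * u from sub_mul _ _ _,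
      Real.cos_add, Real.cos_sub]
    ring
  have sq : ∀ f : Fin n → ℝ, (∑ i, f i) ^ 2 = ∑ i, ∑ j, f i * f j := fun f => by
    rw [_root_.sq, Finset.sum_mul_sum]
  simp only [per]
  rw [sq, sq]
  simp only [Finset.sum_add_distrib, ← Finset.mul_sum, ← Finset.sum_mul]
  try ring

/-- Key positivity lemma. -/
lemma key {α : ℝ} (hα : 0 < α) (hα2 : α < 2) (b c : ℝ) (n : ℕ) (t : Fin n → ℝ)
    (ht : ∀ i, 0 ≤ t i) (lam : Fin n → ℝ) :
    0 ≤ ∑ i, ∑ j, lam i * lam j *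
      ((b + c) ^ 2 / 2 * (t i ^ α + t j ^ α) - b * c * (t i + t j) ^ α
        - (b ^ 2 + c ^ 2) / 2 * |t i - t j| ^ α) := by
  have hKpos := Kc_pos hα hα2
  have hKS : Kc α * (∑ i, ∑ j, lam i * lam j *
      ((b + c) ^ 2 / 2 * (t i ^ α + t j ^ α) - b * c * (t i + t j) ^ α
        - (b ^ 2 + c ^ 2) / 2 * |t i - t j| ^ α)) =
      ∫ u in Ioi (0:ℝ), ∑ i, ∑ j, psi α b c t lam i j u := by
    rw [MeasureTheory.integral_finset_sum _
      (fun i _ => integrable_finset_sum _ (fun j _ => psi_integrable hα hα2 b c t lam i j))]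
    rw [Finset.mul_sum]
    refine Finset.sum_congr rfl fun i _ => ?_
    rw [MeasureTheory.integral_finset_sum _
      (fun j _ => psi_integrable hα hα2 b c t lam i j)]
    rw [Finset.mul_sum]
    exact Finset.sum_congr rfl fun j _ => (psi_integral hα hα2 b c t lam ht i j).symm
  have hnonneg : 0 ≤ ∫ u in Ioi (0:ℝ), ∑ i, ∑ j, psi α b c t lam i j u := by
    apply setIntegral_nonneg measurableSet_Ioi
    intro u hu
    rw [psi_pointwise]
    apply mul_nonneg (by positivity) (Real.rpow_nonneg (le_of_lt hu) _)
  rw [← hKS] at hnonneg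
  nlinarith [hnonneg, hKpos]

end MgfBmAux

/-- The covariance function of the mgfBm is symmetric and positive semidefinite. -/
theorem mgfBm_covariance_posSemidef (H a b c : ℝ) (hH : H ∈ Set.Ioo (0 : ℝ) 1)
    (C : ℝ → ℝ → ℝ)
    (hC : ∀ t s : ℝ,
      C t s = a ^ 2 * min t s + (b + c) ^ 2 / 2 * (t ^ (2 * H) + s ^ (2 * H))
        - b * c * (t + s) ^ (2 * H) - (b ^ 2 + c ^ 2) / 2 * |t - s| ^ (2 * H)) :
    (∀ t s : ℝ, 0 ≤ t → 0 ≤ s → C t s = C s t) ∧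
    (∀ n : ℕ, ∀ t : Fin n → ℝ, (∀ i, 0 ≤ t i) → ∀ lam : Fin n → ℝ,
      0 ≤ ∑ i, ∑ j, lam i * lam j * C (t i) (t j)) := by
  obtain ⟨hH0, hH1⟩ := hH
  constructor
  · intro t s ht hs
    rw [hC, hC, min_comm, abs_sub_comm, add_comm t s]
    ring
  · intro n t ht lam
    have hminsum : 0 ≤ ∑ i, ∑ j, lam i * lam j * min (t i) (t j) := by
      have h := MgfBmAux.key one_pos one_lt_two 1 0 n t ht lam
      refine le_of_le_of_eq h ?_
      refine Finset.sum_congr rfl fun i _ => Finset.sum_congr rfl fun j _ => ?_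
      simp only [Real.rpow_one]
      have hm : min (t i) (t j) = (t i + t j - |t i - t j|) / 2 := by
        rcases le_total (t i) (t j) with h' | h'
        · rw [min_eq_left h', abs_of_nonpos (by linarith)]; ring
        · rw [min_eq_right h', abs_of_nonneg (by linarith)]; ring
      rw [hm]; ring
    have hfrac : 0 ≤ ∑ i, ∑ j, lam i * lam j *
        ((b + c) ^ 2 / 2 * (t i ^ (2 * H) + t j ^ (2 * H)) - b * c * (t i + t j) ^ (2 * H)
          - (b ^ 2 + c ^ 2) / 2 * |t i - t j| ^ (2 * H)) :=
      MgfBmAux.key (by linarith) (by linarith) b c n t ht lam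
    have hsplit : ∑ i, ∑ j, lam i * lam j * C (t i) (t j) =
        a ^ 2 * (∑ i, ∑ j, lam i * lam j * min (t i) (t j)) +
        ∑ i, ∑ j, lam i * lam j *
          ((b + c) ^ 2 / 2 * (t i ^ (2 * H) + t j ^ (2 * H)) - b * c * (t i + t j) ^ (2 * H)
            - (b ^ 2 + c ^ 2) / 2 * |t i - t j| ^ (2 * H)) := by
      rw [Finset.mul_sum, ← Finset.sum_add_distrib]
      refine Finset.sum_congr rfl fun i _ => ?_
      rw [Finset.mul_sum, ← Finset.sum_add_distrib]
      refine Finset.sum_congr rfl fun j _ => ?_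
      rw [hC]; ring
    rw [hsplit]
    exact add_nonneg (mul_nonneg (sq_nonneg a) hminsum) hfrac
end
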